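/- arXiv:1311.0363 — 2 statements merged into one kernel-verified Lean document; each statement's English description precedes it below -/
import Mathlib

section
/- Assume u ▷* v, let x_[i] be an occurrence of the free variable x in u and x_[j] an occurrence of x in v that is a residue of x_[i]. Then Arg(x_[i], u) ⊑ Arg(x_[j], v). -/
/-! ## A de Bruijn presentation of the untyped λ-calculus -/

/-- Untyped λ-terms in de Bruijn representation. -/
inductive Lam : Type where
  | var : ℕ → Lam
  | app : Lam → Lam → Lam
  | abs : Lam → Lam
  deriving DecidableEq

namespace Lam

/-- Lifting of de Bruijn indices (cutoff `d`). -/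
def lift (d : ℕ) : Lam → Lam
  | var n => if n < d then var n else var (n + 1)
  | app a b => app (lift d a) (lift d b)
  | abs a => abs (lift (d + 1) a)

/-- Capture-avoiding substitution of `u` for the free variable `k`. -/
def subst : Lam → ℕ → Lam → Lam
  | var n, k, u => if n = k then u else if k < n then var (n - 1) else var n
  | app a b, k, u => app (subst a k u) (subst b k u)
  | abs a, k, u => abs (subst a (k + 1) (lift 0 u))

/-- One-step β-reduction `▷`. -/
inductive Step : Lam → Lam → Prop
  | beta (a b : Lam) : Step (app (abs a) b) (subst a 0 b)
  | appL {a a' : Lam} (b : Lam) : Step a a' → Step (app a b) (app a' b)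
  | appR (a : Lam) {b b' : Lam} : Step b b' → Step (app a b) (app a b')
  | abs {a a' : Lam} : Step a a' → Step (Lam.abs a) (Lam.abs a')

/-- β-reduction `▷*` : reflexive and transitive closure of `▷`. -/
def Steps : Lam → Lam → Prop := Relation.ReflTransGen Step

/-- β-normal term. -/
def Normal (t : Lam) : Prop := ∀ t', ¬ Step t t'

/-- `Free x t` : the variable `x` (de Bruijn index, seen from the root) occurs free in `t`. -/
def Free : ℕ → Lam → Prop
  | x, var n => x = n
  | x, app a b => Free x a ∨ Free x b
  | x, abs a => Free (x + 1) a

/-- Closed term. -/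
def Closed (t : Lam) : Prop := ∀ x, ¬ Free x t

/-- A variable applied to a (possibly empty) list of arguments. -/
inductive HeadVarApp : Lam → Prop
  | var (n : ℕ) : HeadVarApp (var n)
  | app {a : Lam} (b : Lam) : HeadVarApp a → HeadVarApp (app a b)

/-- Head normal forms `λx₁…λxₙ.(y t₁ … tₘ)`. -/
inductive IsHNF : Lam → Prop
  | head {t : Lam} : HeadVarApp t → IsHNF t
  | abs {a : Lam} : IsHNF a → IsHNF (Lam.abs a)

/-- A term is solvable if it β-reduces to a head normal form. -/
def Solvable (t : Lam) : Prop := ∃ h, Steps t h ∧ IsHNF h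

/-- `Ω = (λx.(x x))(λx.(x x))`. -/
def Omega : Lam := app (abs (app (var 0) (var 0))) (abs (app (var 0) (var 0)))

/-- Ω-reduction `▷_Ω` : replace an unsolvable subterm by `Ω`. -/
inductive OmegaStep : Lam → Lam → Prop
  | unsolv {t : Lam} : ¬ Solvable t → OmegaStep t Omega
  | appL {a a' : Lam} (b : Lam) : OmegaStep a a' → OmegaStep (app a b) (app a' b)
  | appR (a : Lam) {b b' : Lam} : OmegaStep b b' → OmegaStep (app a b) (app a b')
  | abs {a a' : Lam} : OmegaStep a a' → OmegaStep (Lam.abs a) (Lam.abs a')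

/-- `▷_Ω*`. -/
def OmegaSteps : Lam → Lam → Prop := Relation.ReflTransGen OmegaStep

/-- `▷_{βΩ}` : union of `▷` and `▷_Ω`. -/
def BOStep (t t' : Lam) : Prop := Step t t' ∨ OmegaStep t t'

/-- `▷_{βΩ}*`. -/
def BOSteps : Lam → Lam → Prop := Relation.ReflTransGen BOStep

/-- `u ≃ v` : equality in the λ-theory H (common `▷_{βΩ}*`-reduct). -/
def SimH (u v : Lam) : Prop := ∃ w, BOSteps u w ∧ BOSteps v w

/-- Simultaneous (parallel) substitution along `σ`. -/
def psubst (σ : ℕ → Lam) : Lam → Lam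
  | var n => σ n
  | app a b => app (psubst σ a) (psubst σ b)
  | abs a => abs (psubst (fun n => match n with | 0 => var 0 | m + 1 => lift 0 (σ m)) a)

/-- `(x V)` : the application of a head `h` to a list of arguments. -/
def mkApps (h : Lam) (as : List Lam) : Lam := as.foldl app h

/-- `U ⊑ V` : some initial segment of `V` is obtained from `U` by a substitution
followed by componentwise β-reductions. -/
def Sqsubseteq (U V : List Lam) : Prop :=
  ∃ (σ : ℕ → Lam) (W : List Lam), W <+: V ∧
    List.Forall₂ (fun u w => Steps (psubst σ u) w) U W

/-! ### Occurrences as positions -/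

/-- Directions inside a term. -/
inductive Dir : Type where
  | left | right | down
  deriving DecidableEq

/-- Positions (occurrences) in a term. -/
abbrev Pos := List Dir

/-- The subterm of `t` at position `p` (if any). -/
def subtermAt : Lam → Pos → Option Lam
  | t, [] => some t
  | app a _, Dir.left :: p => subtermAt a p
  | app _ b, Dir.right :: p => subtermAt b p
  | abs a, Dir.down :: p => subtermAt a p
  | _, _ :: _ => none

/-- Replace the subterm of `t` at position `p` by `s` (if the position exists). -/
def replaceAt : Lam → Pos → Lam → Option Lam
  | _, [], s => some s
  | app a b, Dir.left :: p, s => (replaceAt a p s).map (fun a' => app a' b)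
  | app a b, Dir.right :: p, s => (replaceAt b p s).map (fun b' => app a b')
  | abs a, Dir.down :: p, s => (replaceAt a p s).map Lam.abs
  | _, _ :: _, _ => none

/-- `OccOf x t p` : position `p` is an occurrence in `t` of the free variable `x`
(index seen from the root, hence shifted by the number of binders crossed). -/
def OccOf (x : ℕ) (t : Lam) (p : Pos) : Prop :=
  subtermAt t p = some (var (x + p.count Dir.down))

/-- `ArgOf t p V` : `V` is the maximal list of arguments, in `t`, of the occurrence
sitting at position `p`; i.e. `([] V)` is the applicative context of that occurrence. -/
def ArgOf (t : Lam) (p : Pos) (V : List Lam) : Prop :=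
  ∃ (q : Pos) (h : Lam),
    p = q ++ List.replicate V.length Dir.left ∧
    (∀ q' : Pos, q ≠ q' ++ [Dir.left]) ∧
    subtermAt t q = some (mkApps h V) ∧ subtermAt t p = some h

/-- `InArgOfOcc x t p q` : `q` is an occurrence of `x` in `t` and the position `p` lies
inside one of the elements of `Arg(x_[q], t)`. -/
def InArgOfOcc (x : ℕ) (t : Lam) (p q : Pos) : Prop :=
  OccOf x t q ∧ ∃ (r : Pos) (n : ℕ),
    q = r ++ List.replicate n Dir.left ∧
    (∀ r' : Pos, r ≠ r' ++ [Dir.left]) ∧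
    ∃ (j : ℕ) (s : Pos), j < n ∧ p = r ++ List.replicate j Dir.left ++ Dir.right :: s

/-- The occurrence `p` of `x` is pure in `t` : no other occurrence `q` of `x` in `t`
is such that `p` occurs in one of the elements of `Arg(x_[q], t)`. -/
def PureOcc (x : ℕ) (t : Lam) (p : Pos) : Prop :=
  OccOf x t p ∧ ∀ q, q ≠ p → ¬ InArgOfOcc x t p q

/-- Renaming of the free variable `y` into `x`. -/
def rename (y x : ℕ) : Lam → Lam
  | var n => if n = y then var x else var n
  | app a b => app (rename y x a) (rename y x b)
  | abs a => abs (rename (y + 1) (x + 1) a)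

/-- `Residue x u v p p'` : along some β-reduction from `u` to `v`, the occurrence `p'` of
`x` in `v` is a residue (traced copy) of the occurrence `p` of `x` in `u`.  This is
expressed by marking the occurrence `p` of `x` with a fresh variable `y` and tracing the
occurrences of `y`. -/
def Residue (x : ℕ) (u v : Lam) (p p' : Pos) : Prop :=
  ∃ (y : ℕ) (u₀ v₀ : Lam),
    ¬ Free y u ∧
    replaceAt u p (var (y + p.count Dir.down)) = some u₀ ∧
    Steps u₀ v₀ ∧ rename y x v₀ = v ∧ OccOf y v₀ p'

/-- The occurrence `p` of the free variable `0` ("x") in `G` is good with respect to the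
closed term `A` : it is pure in `G` and `u[x:=A]` is solvable for every subterm `u` of
`G` in which this occurrence occurs. -/
def GoodOcc (A G : Lam) (p : Pos) : Prop :=
  PureOcc 0 G p ∧
    ∀ (q : Pos) (u : Lam), q <+: p → subtermAt G q = some u →
      Solvable (subst u (q.count Dir.down) A)

/-! ### Miscellaneous -/

/-- A fixed effective Gödel numbering of λ-terms. -/
def code : Lam → ℕ
  | var n => Nat.pair 0 n
  | app a b => Nat.pair 1 (Nat.pair (code a) (code b))
  | abs a => Nat.pair 2 (code a)

/-- Body `f^k z` of the Church numeral. -/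
def churchBody : ℕ → Lam
  | 0 => var 0
  | k + 1 => app (var 1) (churchBody k)

/-- The Church numeral `c_k = λf λz.(f^k z)`. -/
def church (k : ℕ) : Lam := abs (abs (churchBody k))

/-- `n`-fold abstraction `λx₁…λxₙ.t`. -/
def absN : ℕ → Lam → Lam
  | 0, t => t
  | n + 1, t => abs (absN n t)

/-- Number of symbols of a term. -/
def size : Lam → ℕ
  | var _ => 1
  | app a b => size a + size b + 1
  | abs a => size a + 1

/-- Subterm relation. -/
inductive Subterm : Lam → Lam → Prop
  | refl (t : Lam) : Subterm t t
  | appL {s a : Lam} (b : Lam) : Subterm s a → Subterm s (app a b)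
  | appR (a : Lam) {s b : Lam} : Subterm s b → Subterm s (app a b)
  | abs {s a : Lam} : Subterm s a → Subterm s (Lam.abs a)

/-- `t` contains no subterm of the form `(x u)` for the free variable `x`. -/
def NoVarApp : ℕ → Lam → Prop
  | _, var _ => True
  | x, app a b => a ≠ var x ∧ NoVarApp x a ∧ NoVarApp x b
  | x, abs a => NoVarApp (x + 1) a

/-- Headed by the variable `d` : term of the form `(x V)` with `x = var d`. -/
inductive Headed : ℕ → Lam → Prop
  | var (d : ℕ) : Headed d (var d)
  | app {d : ℕ} {a : Lam} (b : Lam) : Headed d a → Headed d (app a b)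

end Lam

namespace Lam

/-! ### Substitution calculus -/

/-- The lifted substitution used in the `abs` case of `psubst`. -/
def upσ (σ : ℕ → Lam) : ℕ → Lam
  | 0 => var 0
  | m + 1 => lift 0 (σ m)

theorem psubst_abs (σ : ℕ → Lam) (a : Lam) :
    psubst σ (abs a) = abs (psubst (upσ σ) a) := rfl

theorem psubst_ext {σ τ : ℕ → Lam} (h : ∀ n, σ n = τ n) (t : Lam) :
    psubst σ t = psubst τ t := by
  induction t generalizing σ τ with
  | var n => exact h n
  | app a b iha ihb => simp only [psubst]; rw [iha h, ihb h]
  | abs a iha =>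
      rw [psubst_abs, psubst_abs]
      congr 1
      apply iha
      intro n
      cases n with
      | zero => rfl
      | succ m => simp only [upσ, h m]

theorem lift_var (c m : ℕ) : lift c (var m) = if m < c then var m else var (m + 1) := rfl

theorem lift_lift (t : Lam) : ∀ d e, e ≤ d → lift e (lift d t) = lift (d + 1) (lift e t) := by
  induction t with
  | var n =>
      intro d e hde
      have h : ∀ (c m : ℕ), lift c (var m) = var (if m < c then m else m + 1) := by
        intro c m; rw [lift_var]; split <;> rfl
      simp only [h]
      congr 1
      split_ifs <;> omega
  | app a b iha ihb => intro d e hde; simp only [lift, iha d e hde, ihb d e hde]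
  | abs a iha =>
      intro d e hde
      simp only [lift, iha (d + 1) (e + 1) (by omega)]

theorem psubst_lift (t : Lam) : ∀ (σ : ℕ → Lam) (d : ℕ),
    psubst σ (lift d t) = psubst (fun n => if n < d then σ n else σ (n + 1)) t := by
  induction t with
  | var n =>
      intro σ d
      rw [lift_var]
      split <;> simp only [psubst] <;> split <;> first | rfl | omega
  | app a b iha ihb => intro σ d; simp only [lift, psubst, iha, ihb]
  | abs a iha =>
      intro σ d
      simp only [lift, psubst_abs, iha]
      congr 1
      apply psubst_ext
      intro n
      cases n with
      | zero => simp [upσ]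
      | succ m =>
          simp only [upσ]
          by_cases hm : m < d
          · rw [if_pos (by omega), if_pos hm]
          · rw [if_neg (by omega), if_neg hm]

theorem lift_psubst (t : Lam) : ∀ (σ : ℕ → Lam) (d : ℕ),
    lift d (psubst σ t) = psubst (fun n => lift d (σ n)) t := by
  induction t with
  | var n => intro σ d; rfl
  | app a b iha ihb => intro σ d; simp only [psubst, lift, iha, ihb]
  | abs a iha =>
      intro σ d
      simp only [psubst_abs, lift, iha]
      congr 1
      apply psubst_ext
      intro n
      cases n with
      | zero => simp [upσ, lift_var]
      | succ m => simp only [upσ]; exact (lift_lift (σ m) d 0 (Nat.zero_le d)).symm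

theorem psubst_psubst (t : Lam) : ∀ (σ τ : ℕ → Lam),
    psubst τ (psubst σ t) = psubst (fun n => psubst τ (σ n)) t := by
  induction t with
  | var n => intro σ τ; rfl
  | app a b iha ihb => intro σ τ; simp only [psubst, iha, ihb]
  | abs a iha =>
      intro σ τ
      simp only [psubst_abs, iha]
      congr 1
      apply psubst_ext
      intro n
      cases n with
      | zero => rfl
      | succ m =>
          show psubst (upσ τ) (lift 0 (σ m)) = lift 0 (psubst τ (σ m))
          rw [psubst_lift, lift_psubst]
          apply psubst_ext
          intro n
          simp [upσ]

theorem psubst_id (t : Lam) : psubst var t = t := by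
  induction t with
  | var n => rfl
  | app a b iha ihb => simp only [psubst, iha, ihb]
  | abs a iha =>
      rw [psubst_abs]
      conv_rhs => rw [← iha]
      congr 1
      apply psubst_ext
      intro n
      cases n <;> simp [upσ, lift_var]

/-- The parallel substitution corresponding to `subst · k b`. -/
def substσ (k : ℕ) (b : Lam) : ℕ → Lam :=
  fun n => if n = k then b else if k < n then var (n - 1) else var n

theorem subst_eq_psubst (t : Lam) : ∀ (k : ℕ) (b : Lam), subst t k b = psubst (substσ k b) t := by
  induction t with
  | var n => intro k b; rfl
  | app a b iha ihb => intro k u; simp only [subst, psubst, iha, ihb]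
  | abs a iha =>
      intro k b
      simp only [subst, psubst_abs, iha]
      congr 1
      apply psubst_ext
      intro n
      cases n with
      | zero => simp [substσ, upσ]
      | succ m =>
          show substσ (k + 1) (lift 0 b) (m + 1) = lift 0 (substσ k b m)
          simp only [substσ]
          by_cases hm : m = k
          · subst hm; simp
          · rw [if_neg (by omega), if_neg hm]
            by_cases hk : k < m
            · rw [if_pos (by omega), if_pos hk, lift_var, if_neg (by omega)]
              congr 1
              omega
            · rw [if_neg (by omega), if_neg hk, lift_var, if_neg (by omega)]

theorem lift_eq_psubst (t : Lam) (d : ℕ) :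
    lift d t = psubst (fun n => if n < d then var n else var (n + 1)) t := by
  conv_lhs => rw [← psubst_id (lift d t)]
  rw [psubst_lift]

theorem liftIter_eq_psubst (m : ℕ) (d : ℕ) (t : Lam) :
    (lift d)^[m] t = psubst (fun n => if n < d then var n else var (n + m)) t := by
  induction m with
  | zero =>
      simp only [Function.iterate_zero, id_eq]
      conv_lhs => rw [← psubst_id t]
      apply psubst_ext
      intro n; split <;> rfl
  | succ m ih =>
      rw [Function.iterate_succ_apply', ih, lift_eq_psubst, psubst_psubst]
      apply psubst_ext
      intro n
      by_cases hn : n < d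
      · simp only [if_pos hn, psubst, if_pos hn]
      · simp only [if_neg hn, psubst]
        rw [if_neg (by omega : ¬ n + m < d)]
        exact congrArg var (by omega)

theorem psubst_subst0 (σ : ℕ → Lam) (a b : Lam) :
    psubst σ (subst a 0 b) = subst (psubst (upσ σ) a) 0 (psubst σ b) := by
  rw [subst_eq_psubst, subst_eq_psubst, psubst_psubst, psubst_psubst]
  apply psubst_ext
  intro n
  cases n with
  | zero => simp [substσ, psubst, upσ]
  | succ m =>
      have h1 : substσ 0 b (m + 1) = var m := by simp [substσ]
      have h2 : upσ σ (m + 1) = lift 0 (σ m) := rfl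
      rw [h1, h2, psubst_lift]
      show σ m = _
      have he : psubst (fun n => if n < 0 then substσ 0 (psubst σ b) n
          else substσ 0 (psubst σ b) (n + 1)) (σ m) = psubst var (σ m) :=
        psubst_ext (fun n => by simp [substσ]) _
      rw [he, psubst_id]

theorem step_psubst {t t' : Lam} (h : Step t t') (σ : ℕ → Lam) :
    Step (psubst σ t) (psubst σ t') := by
  induction h generalizing σ with
  | beta a b =>
      rw [psubst_subst0]
      exact Step.beta _ _
  | appL b h ih => exact Step.appL _ (ih σ)
  | appR a h ih => exact Step.appR _ (ih σ)
  | abs h ih => simp only [psubst_abs]; exact Step.abs (ih _)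

theorem steps_psubst {t t' : Lam} (h : Steps t t') (σ : ℕ → Lam) :
    Steps (psubst σ t) (psubst σ t') :=
  Relation.ReflTransGen.lift (psubst σ) (fun _ _ hs => step_psubst hs σ) _ _ h

end Lam

namespace Lam

/-! ### Positions, mkApps, occurrences -/

/-- "Not ending with `left`". -/
def NEL (q : Pos) : Prop := ∀ r : Pos, q ≠ r ++ [Dir.left]

theorem nel_nil : NEL [] := fun r h => by simp at h

theorem nel_cons_of_ne {q : Pos} {d : Dir} (hd : d ≠ Dir.left) (h : NEL q) : NEL (d :: q) := by
  intro r hr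
  cases r with
  | nil =>
      rw [List.nil_append] at hr
      injection hr with h1 h2
      exact hd h1
  | cons e r' =>
      injection hr with h1 h2
      exact h r' h2

theorem nel_cons_of_ne_nil {q : Pos} (d : Dir) (h : NEL q) (hq : q ≠ []) : NEL (d :: q) := by
  intro r hr
  cases r with
  | nil =>
      rw [List.nil_append] at hr
      injection hr with h1 h2
      exact hq h2
  | cons e r' =>
      injection hr with h1 h2
      exact h r' h2

theorem nel_concat {q : Pos} {d : Dir} (hd : d ≠ Dir.left) : NEL (q ++ [d]) := by
  intro r hr
  obtain ⟨h1, h2⟩ := List.append_inj' hr rfl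
  injection h2 with h3
  exact hd h3

theorem NEL.append {r : Pos} (h : NEL r) (hne : r ≠ []) (z : Pos) : NEL (z ++ r) := by
  intro r' hr'
  rcases List.eq_nil_or_concat r with rfl | ⟨r0, d, hc⟩
  · exact hne rfl
  · rw [List.concat_eq_append] at hc
    subst hc
    rw [← List.append_assoc] at hr'
    obtain ⟨h1, h2⟩ := List.append_inj' hr' rfl
    injection h2 with h3
    subst h3
    exact h r0 rfl

theorem strip_unique_aux {q q' : Pos} {m m' : ℕ} (hle : m ≤ m') (hq : NEL q) (hq' : NEL q')
    (h : q ++ List.replicate m Dir.left = q' ++ List.replicate m' Dir.left) :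
    q = q' ∧ m = m' := by
  have hrep : List.replicate m' Dir.left
      = List.replicate (m' - m) Dir.left ++ List.replicate m Dir.left := by
    rw [← List.replicate_add]
    congr 1
    omega
  rw [hrep, ← List.append_assoc] at h
  have h2 : q = q' ++ List.replicate (m' - m) Dir.left := List.append_cancel_right h
  rcases Nat.eq_zero_or_pos (m' - m) with h0 | h0
  · rw [h0] at h2
    simp at h2
    exact ⟨h2, by omega⟩
  · exfalso
    have : List.replicate (m' - m) Dir.left
        = List.replicate (m' - m - 1) Dir.left ++ [Dir.left] := by
      rw [← List.replicate_succ']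
      congr 1
      omega
    rw [this, ← List.append_assoc] at h2
    exact hq _ h2

theorem strip_unique {q q' : Pos} {m m' : ℕ} (hq : NEL q) (hq' : NEL q')
    (h : q ++ List.replicate m Dir.left = q' ++ List.replicate m' Dir.left) :
    q = q' ∧ m = m' := by
  rcases Nat.le_total m m' with hle | hle
  · exact strip_unique_aux hle hq hq' h
  · obtain ⟨h1, h2⟩ := strip_unique_aux hle hq' hq h.symm
    exact ⟨h1.symm, h2.symm⟩

theorem strip_exists (p : Pos) : ∃ q m, p = q ++ List.replicate m Dir.left ∧ NEL q := by
  induction p using List.reverseRecOn with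
  | nil => exact ⟨[], 0, rfl, nel_nil⟩
  | append_singleton p d ih =>
      cases d with
      | left =>
          obtain ⟨q, m, rfl, hq⟩ := ih
          refine ⟨q, m + 1, ?_, hq⟩
          rw [List.replicate_succ', List.append_assoc]
      | right => exact ⟨p ++ [Dir.right], 0, by simp, nel_concat (by simp)⟩
      | down => exact ⟨p ++ [Dir.down], 0, by simp, nel_concat (by simp)⟩

theorem cons_ne_replicate_left {d : Dir} {s : Pos} {m : ℕ} (hd : d ≠ Dir.left) :
    d :: s ≠ List.replicate m Dir.left := by
  cases m with
  | zero => simp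
  | succ m =>
      rw [List.replicate_succ]
      intro h
      injection h with h1 h2
      exact hd h1

/-! ### subtermAt basics -/

theorem subtermAt_nil (t : Lam) : subtermAt t [] = some t := by cases t <;> rfl

theorem subtermAt_var_cons (n : ℕ) (d : Dir) (p : Pos) :
    subtermAt (var n) (d :: p) = none := by cases d <;> rfl

theorem subtermAt_app_left (a b : Lam) (p : Pos) :
    subtermAt (app a b) (Dir.left :: p) = subtermAt a p := rfl

theorem subtermAt_app_right (a b : Lam) (p : Pos) :
    subtermAt (app a b) (Dir.right :: p) = subtermAt b p := rfl

theorem subtermAt_app_down (a b : Lam) (p : Pos) :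
    subtermAt (app a b) (Dir.down :: p) = none := rfl

theorem subtermAt_abs_down (a : Lam) (p : Pos) :
    subtermAt (abs a) (Dir.down :: p) = subtermAt a p := rfl

theorem subtermAt_abs_left (a : Lam) (p : Pos) :
    subtermAt (abs a) (Dir.left :: p) = none := rfl

theorem subtermAt_abs_right (a : Lam) (p : Pos) :
    subtermAt (abs a) (Dir.right :: p) = none := rfl

/-! ### mkApps -/

theorem mkApps_cons (h a : Lam) (V : List Lam) : mkApps h (a :: V) = mkApps (app h a) V := rfl

theorem mkApps_concat (h : Lam) (V : List Lam) (a : Lam) :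
    mkApps h (V ++ [a]) = app (mkApps h V) a := by
  simp [mkApps, List.foldl_append]

theorem mkApps_append (h : Lam) (V W : List Lam) :
    mkApps h (V ++ W) = mkApps (mkApps h V) W := by
  simp [mkApps, List.foldl_append]

theorem subtermAt_mkApps_lefts (V : List Lam) : ∀ h : Lam,
    subtermAt (mkApps h V) (List.replicate V.length Dir.left) = some h := by
  induction V using List.reverseRecOn with
  | nil => intro h; exact subtermAt_nil h
  | append_singleton V a ih =>
      intro h
      rw [mkApps_concat]
      simp only [List.length_append, List.length_singleton]
      rw [List.replicate_succ, subtermAt_app_left]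
      exact ih h

theorem exists_mkApps_of_subtermAt_lefts : ∀ (n : ℕ) (w h : Lam),
    subtermAt w (List.replicate n Dir.left) = some h →
    ∃ U : List Lam, U.length = n ∧ w = mkApps h U := by
  intro n
  induction n with
  | zero =>
      intro w h hw
      rw [show List.replicate 0 Dir.left = ([] : Pos) from rfl, subtermAt_nil] at hw
      obtain rfl : w = h := Option.some.inj hw
      exact ⟨[], rfl, rfl⟩
  | succ m ih =>
      intro w h hw
      rw [List.replicate_succ] at hw
      cases w with
      | var k => rw [subtermAt_var_cons] at hw; cases hw
      | abs a => rw [subtermAt_abs_left] at hw; cases hw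
      | app a b =>
          rw [subtermAt_app_left] at hw
          obtain ⟨U, hlen, rfl⟩ := ih a h hw
          exact ⟨U ++ [b], by simp [hlen], by rw [mkApps_concat]⟩

theorem mkApps_inj : ∀ (U U' : List Lam) (h h' : Lam), U.length = U'.length →
    mkApps h U = mkApps h' U' → h = h' ∧ U = U' := by
  intro U
  induction U using List.reverseRecOn with
  | nil =>
      intro U' h h' hlen heq
      have : U' = [] := List.eq_nil_of_length_eq_zero hlen.symm
      subst this
      exact ⟨heq, rfl⟩
  | append_singleton V a ih =>
      intro U' h h' hlen heq
      rcases List.eq_nil_or_concat U' with rfl | ⟨V', a', hc⟩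
      · simp at hlen
      · rw [List.concat_eq_append] at hc
        subst hc
        rw [mkApps_concat, mkApps_concat] at heq
        obtain ⟨h1, h2⟩ := Lam.app.inj heq
        have hlen' : V.length = V'.length := by
          simp only [List.length_append, List.length_singleton] at hlen
          omega
        obtain ⟨h3, h4⟩ := ih V' h h' hlen' h1
        exact ⟨h3, by rw [h4, h2]⟩

theorem hom_mkApps (F : Lam → Lam) (hF : ∀ x y, F (app x y) = app (F x) (F y)) :
    ∀ (V : List Lam) (h : Lam), F (mkApps h V) = mkApps (F h) (V.map F) := by
  intro V
  induction V with
  | nil => intro h; rfl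
  | cons a V ih =>
      intro h
      rw [mkApps_cons, ih, hF]
      rfl

/-! ### subtermAt -/

theorem subtermAt_append (q r : Pos) : ∀ t : Lam,
    subtermAt t (q ++ r) = (subtermAt t q).bind (fun w => subtermAt w r) := by
  induction q with
  | nil => intro t; simp [subtermAt]
  | cons d q ih =>
      intro t
      cases t with
      | var n =>
          cases d <;> simp [List.cons_append, subtermAt_var_cons]
      | app a b =>
          cases d <;> simp [List.cons_append, subtermAt_app_left, subtermAt_app_right,
            subtermAt_app_down, ih]
      | abs a =>
          cases d <;> simp [List.cons_append, subtermAt_abs_down, subtermAt_abs_left,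
            subtermAt_abs_right, ih]

theorem argOf_exists {t : Lam} {p : Pos} {h : Lam} (hp : subtermAt t p = some h) :
    ∃ U, ArgOf t p U := by
  obtain ⟨q, m, rfl, hq⟩ := strip_exists p
  have hp2 := hp
  rw [subtermAt_append] at hp2
  cases hw : subtermAt t q with
  | none => rw [hw] at hp2; cases hp2
  | some w =>
      rw [hw, Option.bind_some] at hp2
      obtain ⟨U, hlen, rfl⟩ := exists_mkApps_of_subtermAt_lefts m w h hp2
      exact ⟨U, q, h, by rw [hlen], hq, hw, hp⟩

theorem argOf_functional {t : Lam} {p : Pos} {U U' : List Lam}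
    (h1 : ArgOf t p U) (h2 : ArgOf t p U') : U = U' := by
  obtain ⟨q, h, hp, hq, hsub, hhead⟩ := h1
  obtain ⟨q', h', hp', hq', hsub', hhead'⟩ := h2
  rw [hp] at hp'
  obtain ⟨rfl, hlen⟩ := strip_unique hq hq' hp'
  rw [hsub] at hsub'
  exact (mkApps_inj U U' h h' hlen (Option.some.inj hsub')).2

theorem argOf_right {a b : Lam} {s : Pos} {U : List Lam} :
    ArgOf (app a b) (Dir.right :: s) U ↔ ArgOf b s U := by
  constructor
  · rintro ⟨q, h, hp, hq, hsub, hhead⟩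
    cases q with
    | nil => exact absurd hp (cons_ne_replicate_left (by simp))
    | cons d q' =>
        injection hp with hd htl
        subst hd
        refine ⟨q', h, htl, ?_, hsub, hhead⟩
        intro r hr
        exact hq (Dir.right :: r) (by rw [hr]; rfl)
  · rintro ⟨q, h, hp, hq, hsub, hhead⟩
    exact ⟨Dir.right :: q, h, by rw [List.cons_append, hp],
      nel_cons_of_ne (by simp) hq, hsub, hhead⟩

theorem argOf_down {a : Lam} {s : Pos} {U : List Lam} :
    ArgOf (abs a) (Dir.down :: s) U ↔ ArgOf a s U := by
  constructor
  · rintro ⟨q, h, hp, hq, hsub, hhead⟩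
    cases q with
    | nil => exact absurd hp (cons_ne_replicate_left (by simp))
    | cons d q' =>
        injection hp with hd htl
        subst hd
        refine ⟨q', h, htl, ?_, hsub, hhead⟩
        intro r hr
        exact hq (Dir.down :: r) (by rw [hr]; rfl)
  · rintro ⟨q, h, hp, hq, hsub, hhead⟩
    exact ⟨Dir.down :: q, h, by rw [List.cons_append, hp],
      nel_cons_of_ne (by simp) hq, hsub, hhead⟩

theorem argOf_left {a b : Lam} {s : Pos} {U : List Lam} :
    ArgOf (app a b) (Dir.left :: s) U ↔
      ∃ U₀, ArgOf a s U₀ ∧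
        ((s = List.replicate U₀.length Dir.left ∧ U = U₀ ++ [b]) ∨
         (s ≠ List.replicate U₀.length Dir.left ∧ U = U₀)) := by
  constructor
  · rintro ⟨q, h, hp, hq, hsub, hhead⟩
    cases q with
    | nil =>
        rw [List.nil_append] at hp
        cases hU : U.length with
        | zero => rw [hU] at hp; cases hp
        | succ n =>
            rw [hU, List.replicate_succ] at hp
            injection hp with h1 h2
            rcases List.eq_nil_or_concat U with rfl | ⟨U₀, a', hc⟩
            · simp at hU
            · rw [List.concat_eq_append] at hc
              subst hc
              rw [mkApps_concat] at hsub
              simp only [subtermAt] at hsub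
              obtain ⟨ha, hb⟩ := Lam.app.inj (Option.some.inj hsub)
              have hlen : U₀.length = n := by
                simp only [List.length_append, List.length_singleton] at hU
                omega
              refine ⟨U₀, ⟨[], h, by rw [List.nil_append, h2, hlen], nel_nil,
                by rw [ha]; exact subtermAt_nil _, hhead⟩, Or.inl ⟨by rw [h2, hlen], by rw [hb]⟩⟩
    | cons d q' =>
        injection hp with hd htl
        subst hd
        have hq' : NEL q' := fun r hr => hq (Dir.left :: r) (by rw [hr]; rfl)
        have hq'ne : q' ≠ [] := by
          intro h0
          exact hq [] (by rw [h0]; rfl)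
        have htl' : s = q' ++ List.replicate U.length Dir.left := htl
        refine ⟨U, ⟨q', h, htl', hq', hsub, hhead⟩, Or.inr ⟨?_, rfl⟩⟩
        intro hs
        exact hq'ne (strip_unique hq' nel_nil
          (show q' ++ List.replicate U.length Dir.left
            = [] ++ List.replicate U.length Dir.left by
              rw [List.nil_append, ← htl', hs])).1
  · rintro ⟨U₀, ⟨q, h, hp, hq, hsub, hhead⟩, hcase⟩
    rcases hcase with ⟨hs, rfl⟩ | ⟨hs, rfl⟩
    · have hqnil : q = [] := by
        refine (strip_unique hq nel_nil (show q ++ List.replicate U₀.length Dir.left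
          = [] ++ List.replicate U₀.length Dir.left by rw [← hp, hs, List.nil_append])).1
      subst hqnil
      refine ⟨[], h, ?_, nel_nil, ?_, hhead⟩
      · rw [hs]; simp [List.replicate_succ]
      · rw [subtermAt_nil] at hsub
        rw [subtermAt_nil, mkApps_concat]
        congr 2
        exact Option.some.inj hsub
    · have hqne : q ≠ [] := by
        intro h0
        rw [h0, List.nil_append] at hp
        exact hs hp
      exact ⟨Dir.left :: q, h, by rw [List.cons_append, hp],
        nel_cons_of_ne_nil _ hq hqne, hsub, hhead⟩

end Lam

namespace Lam

/-! ### lift / subst / rename vs positions -/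

theorem count_down_down (p : Pos) :
    List.count Dir.down (Dir.down :: p) = List.count Dir.down p + 1 := by
  simp [List.count_cons]

theorem count_down_left (p : Pos) :
    List.count Dir.down (Dir.left :: p) = List.count Dir.down p := by
  simp [List.count_cons]

theorem count_down_right (p : Pos) :
    List.count Dir.down (Dir.right :: p) = List.count Dir.down p := by
  simp [List.count_cons]

theorem lift_app (d : ℕ) (a b : Lam) : lift d (app a b) = app (lift d a) (lift d b) := rfl

theorem subtermAt_lift : ∀ (p : Pos) (t : Lam) (d : ℕ),
    subtermAt (lift d t) p = Option.map (lift (d + p.count Dir.down)) (subtermAt t p) := by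
  intro p
  induction p with
  | nil =>
      intro t d
      rw [subtermAt_nil, subtermAt_nil]
      simp
  | cons e p ih =>
      intro t d
      cases t with
      | var n =>
          rw [lift_var]
          split <;> simp only [subtermAt_var_cons] <;> rfl
      | app a b =>
          rw [lift_app]
          cases e with
          | left =>
              rw [subtermAt_app_left, subtermAt_app_left, ih]
              simp [List.count_cons]
          | right =>
              rw [subtermAt_app_right, subtermAt_app_right, ih]
              simp [List.count_cons]
          | down => rw [subtermAt_app_down, subtermAt_app_down]; rfl
      | abs a =>
          show subtermAt (abs (lift (d + 1) a)) (e :: p) = _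
          cases e with
          | left => rw [subtermAt_abs_left, subtermAt_abs_left]; rfl
          | right => rw [subtermAt_abs_right, subtermAt_abs_right]; rfl
          | down =>
              rw [subtermAt_abs_down, subtermAt_abs_down, ih]
              have : d + 1 + p.count Dir.down = d + (Dir.down :: p).count Dir.down := by
                simp [List.count_cons]
                omega
              rw [this]

theorem subtermAt_liftIter (m : ℕ) : ∀ (b : Lam) (s : Pos),
    subtermAt ((lift 0)^[m] b) s
      = Option.map ((lift (s.count Dir.down))^[m]) (subtermAt b s) := by
  induction m with
  | zero => intro b s; simp
  | succ m ih =>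
      intro b s
      rw [Function.iterate_succ_apply', subtermAt_lift, ih, Option.map_map]
      congr 1
      funext w
      show lift (0 + s.count Dir.down) ((lift (s.count Dir.down))^[m] w) = _
      rw [Function.iterate_succ_apply', Nat.zero_add]

theorem liftIter_var (m d c : ℕ) :
    (lift d)^[m] (var c) = if c < d then var c else var (c + m) := by
  rw [liftIter_eq_psubst]
  rfl

theorem var_of_liftIter_eq_var {m d : ℕ} {b : Lam} {c : ℕ}
    (h : (lift d)^[m] b = var c) : ∃ c₀, b = var c₀ := by
  cases b with
  | var n => exact ⟨n, rfl⟩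
  | app a b => rw [liftIter_eq_psubst] at h; cases h
  | abs a => rw [liftIter_eq_psubst, psubst_abs] at h; cases h

theorem subst_app (a b : Lam) (k : ℕ) (u : Lam) :
    subst (app a b) k u = app (subst a k u) (subst b k u) := rfl

theorem subst_abs (a : Lam) (k : ℕ) (u : Lam) :
    subst (abs a) k u = abs (subst a (k + 1) (lift 0 u)) := rfl

theorem subtermAt_subst : ∀ (p : Pos) (t : Lam) (k : ℕ) (b w : Lam),
    subtermAt t p = some w →
    subtermAt (subst t k b) p =
      some (subst w (k + p.count Dir.down) ((lift 0)^[p.count Dir.down] b)) := by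
  intro p
  induction p with
  | nil =>
      intro t k b w hw
      rw [subtermAt_nil] at hw
      obtain rfl := Option.some.inj hw
      rw [subtermAt_nil]
      simp
  | cons e p ih =>
      intro t k b w hw
      cases t with
      | var n => rw [subtermAt_var_cons] at hw; cases hw
      | app a a₂ =>
          rw [subst_app]
          cases e with
          | left =>
              rw [subtermAt_app_left] at hw
              rw [subtermAt_app_left, ih a k b w hw]
              simp [List.count_cons]
          | right =>
              rw [subtermAt_app_right] at hw
              rw [subtermAt_app_right, ih a₂ k b w hw]
              simp [List.count_cons]
          | down => rw [subtermAt_app_down] at hw; cases hw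
      | abs a =>
          cases e with
          | left => rw [subtermAt_abs_left] at hw; cases hw
          | right => rw [subtermAt_abs_right] at hw; cases hw
          | down =>
              rw [subtermAt_abs_down] at hw
              rw [subst_abs, subtermAt_abs_down, ih a (k + 1) (lift 0 b) w hw,
                count_down_down,
                show k + (List.count Dir.down p + 1) = k + 1 + List.count Dir.down p
                  from by omega,
                Function.iterate_succ_apply]

theorem subtermAt_subst_cases : ∀ (p : Pos) (t : Lam) (k : ℕ) (b w : Lam),
    subtermAt (subst t k b) p = some w →
    (∃ w₀, subtermAt t p = some w₀ ∧
        w = subst w₀ (k + p.count Dir.down) ((lift 0)^[p.count Dir.down] b)) ∨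
    (∃ z s, p = z ++ s ∧ subtermAt t z = some (var (k + z.count Dir.down)) ∧
        subtermAt ((lift 0)^[z.count Dir.down] b) s = some w) := by
  intro p
  induction p with
  | nil =>
      intro t k b w hw
      rw [subtermAt_nil] at hw
      exact Or.inl ⟨t, subtermAt_nil t, by simpa using (Option.some.inj hw).symm⟩
  | cons e p ih =>
      intro t k b w hw
      cases t with
      | var n =>
          by_cases hn : n = k
          · subst hn
            rw [show subst (var n) n b = b by simp [subst]] at hw
            exact Or.inr ⟨[], e :: p, rfl, by rw [subtermAt_nil]; simp, by simpa using hw⟩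
          · exfalso
            have : ∃ c, subst (var n) k b = var c := by
              simp only [subst]
              rw [if_neg hn]
              split
              · exact ⟨n - 1, rfl⟩
              · exact ⟨n, rfl⟩
            obtain ⟨c, hc⟩ := this
            rw [hc, subtermAt_var_cons] at hw
            cases hw
      | app a a₂ =>
          rw [subst_app] at hw
          cases e with
          | left =>
              rw [subtermAt_app_left] at hw
              rcases ih a k b w hw with ⟨w₀, h1, h2⟩ | ⟨z, s, h1, h2, h3⟩
              · exact Or.inl ⟨w₀, by rw [subtermAt_app_left]; exact h1,
                  by rw [h2, count_down_left]⟩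
              · refine Or.inr ⟨Dir.left :: z, s, by rw [h1]; rfl, ?_, ?_⟩
                · rw [subtermAt_app_left, h2, count_down_left]
                · exact h3
          | right =>
              rw [subtermAt_app_right] at hw
              rcases ih a₂ k b w hw with ⟨w₀, h1, h2⟩ | ⟨z, s, h1, h2, h3⟩
              · exact Or.inl ⟨w₀, by rw [subtermAt_app_right]; exact h1,
                  by rw [h2, count_down_right]⟩
              · refine Or.inr ⟨Dir.right :: z, s, by rw [h1]; rfl, ?_, ?_⟩
                · rw [subtermAt_app_right, h2, count_down_right]
                · exact h3
          | down => rw [subtermAt_app_down] at hw; cases hw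
      | abs a =>
          rw [subst_abs] at hw
          cases e with
          | left => rw [subtermAt_abs_left] at hw; cases hw
          | right => rw [subtermAt_abs_right] at hw; cases hw
          | down =>
              rw [subtermAt_abs_down] at hw
              rcases ih a (k + 1) (lift 0 b) w hw with ⟨w₀, h1, h2⟩ | ⟨z, s, h1, h2, h3⟩
              · refine Or.inl ⟨w₀, by rw [subtermAt_abs_down]; exact h1, ?_⟩
                rw [h2, count_down_down,
                  show k + (List.count Dir.down p + 1) = k + 1 + List.count Dir.down p
                    from by omega,
                  Function.iterate_succ_apply]
              · refine Or.inr ⟨Dir.down :: z, s, by rw [h1]; rfl, ?_, ?_⟩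
                · rw [subtermAt_abs_down, count_down_down, h2,
                    show k + 1 + List.count Dir.down z
                      = k + (List.count Dir.down z + 1) from by omega]
                · rw [count_down_down, Function.iterate_succ_apply]
                  exact h3

theorem subst_mkApps (h : Lam) (V : List Lam) (k : ℕ) (b : Lam) :
    subst (mkApps h V) k b = mkApps (subst h k b) (V.map (subst · k b)) :=
  hom_mkApps (subst · k b) (fun _ _ => rfl) V h

theorem liftIter_mkApps (m d : ℕ) (h : Lam) (V : List Lam) :
    (lift d)^[m] (mkApps h V) = mkApps ((lift d)^[m] h) (V.map ((lift d)^[m])) := by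
  induction m generalizing h V with
  | zero => simp
  | succ m ih =>
      rw [Function.iterate_succ_apply', ih,
        hom_mkApps (lift d) (fun _ _ => rfl), List.map_map]
      congr 1
      · rw [Function.iterate_succ_apply']
      · rw [Function.iterate_succ']

/-! ### rename -/

theorem rename_app (y x : ℕ) (a b : Lam) :
    rename y x (app a b) = app (rename y x a) (rename y x b) := rfl

def renσ (y x : ℕ) : ℕ → Lam := fun n => if n = y then var x else var n

theorem rename_eq_psubst (t : Lam) : ∀ y x, rename y x t = psubst (renσ y x) t := by
  induction t with
  | var n =>
      intro y x
      simp only [rename, psubst, renσ]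
  | app a b iha ihb => intro y x; simp only [rename, psubst, iha, ihb]
  | abs a iha =>
      intro y x
      simp only [rename, psubst_abs, iha]
      congr 1
      apply psubst_ext
      intro n
      cases n with
      | zero => simp [renσ, upσ]
      | succ m =>
          simp only [renσ, upσ]
          by_cases hm : m = y
          · subst hm
            rw [if_pos rfl, if_pos rfl, lift_var, if_neg (by omega : ¬ x < 0)]
          · rw [if_neg (show ¬ m + 1 = y + 1 from fun hc => hm (by omega)), if_neg hm,
              lift_var, if_neg (by omega : ¬ m < 0)]

theorem subtermAt_rename : ∀ (p : Pos) (t : Lam) (y x : ℕ),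
    subtermAt (rename y x t) p
      = Option.map (rename (y + p.count Dir.down) (x + p.count Dir.down)) (subtermAt t p) := by
  intro p
  induction p with
  | nil => intro t y x; rw [subtermAt_nil, subtermAt_nil]; simp
  | cons e p ih =>
      intro t y x
      cases t with
      | var n =>
          show subtermAt (if n = y then var x else var n) (e :: p) = _
          split <;> simp only [subtermAt_var_cons] <;> rfl
      | app a b =>
          rw [rename_app]
          cases e with
          | left =>
              rw [subtermAt_app_left, subtermAt_app_left, ih]
              simp [List.count_cons]
          | right =>
              rw [subtermAt_app_right, subtermAt_app_right, ih]
              simp [List.count_cons]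
          | down => rw [subtermAt_app_down, subtermAt_app_down]; rfl
      | abs a =>
          show subtermAt (abs (rename (y + 1) (x + 1) a)) (e :: p) = _
          cases e with
          | left => rw [subtermAt_abs_left, subtermAt_abs_left]; rfl
          | right => rw [subtermAt_abs_right, subtermAt_abs_right]; rfl
          | down =>
              rw [subtermAt_abs_down, subtermAt_abs_down, ih, count_down_down,
                show y + (List.count Dir.down p + 1) = y + 1 + List.count Dir.down p
                  from by omega,
                show x + (List.count Dir.down p + 1) = x + 1 + List.count Dir.down p
                  from by omega]

theorem rename_app_inv {y x : ℕ} {w s₁ s₂ : Lam} (h : rename y x w = app s₁ s₂) :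
    ∃ w₁ w₂, w = app w₁ w₂ ∧ rename y x w₁ = s₁ ∧ rename y x w₂ = s₂ := by
  cases w with
  | var n =>
      exfalso
      simp only [rename] at h
      split at h <;> cases h
  | app w₁ w₂ => exact ⟨w₁, w₂, rfl, (Lam.app.inj h).1, (Lam.app.inj h).2⟩
  | abs a => cases h

theorem rename_mkApps_inv {y x : ℕ} : ∀ (V : List Lam) (w h : Lam),
    rename y x w = mkApps h V →
    ∃ h₀ V₀, w = mkApps h₀ V₀ ∧ rename y x h₀ = h ∧ V = V₀.map (rename y x) ∧
      V₀.length = V.length := by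
  intro V
  induction V using List.reverseRecOn with
  | nil => intro w h hw; exact ⟨w, [], rfl, hw, rfl, rfl⟩
  | append_singleton V a ih =>
      intro w h hw
      rw [mkApps_concat] at hw
      obtain ⟨w₁, w₂, rfl, h1, h2⟩ := rename_app_inv hw
      obtain ⟨h₀, V₀, rfl, h3, h4, h5⟩ := ih w₁ h h1
      refine ⟨h₀, V₀ ++ [w₂], by rw [mkApps_concat], h3, ?_, by simp [h5]⟩
      rw [List.map_append, ← h4]
      simp [h2]

/-! ### replaceAt -/

theorem replaceAt_nil (t s : Lam) : replaceAt t [] s = some s := by cases t <;> rfl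

theorem replaceAt_var_cons (n : ℕ) (d : Dir) (p : Pos) (s : Lam) :
    replaceAt (var n) (d :: p) s = none := by cases d <;> rfl

theorem replaceAt_app_left (a b : Lam) (p : Pos) (s : Lam) :
    replaceAt (app a b) (Dir.left :: p) s
      = (replaceAt a p s).map (fun a' => app a' b) := rfl

theorem replaceAt_app_right (a b : Lam) (p : Pos) (s : Lam) :
    replaceAt (app a b) (Dir.right :: p) s
      = (replaceAt b p s).map (fun b' => app a b') := rfl

theorem replaceAt_app_down (a b : Lam) (p : Pos) (s : Lam) :
    replaceAt (app a b) (Dir.down :: p) s = none := rfl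

theorem replaceAt_abs_down (a : Lam) (p : Pos) (s : Lam) :
    replaceAt (abs a) (Dir.down :: p) s = (replaceAt a p s).map Lam.abs := rfl

theorem replaceAt_abs_left (a : Lam) (p : Pos) (s : Lam) :
    replaceAt (abs a) (Dir.left :: p) s = none := rfl

theorem replaceAt_abs_right (a : Lam) (p : Pos) (s : Lam) :
    replaceAt (abs a) (Dir.right :: p) s = none := rfl

theorem subtermAt_replaceAt_self : ∀ (p : Pos) (t t' s : Lam),
    replaceAt t p s = some t' → subtermAt t' p = some s := by
  intro p
  induction p with
  | nil =>
      intro t t' s h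
      rw [replaceAt_nil] at h
      obtain rfl := Option.some.inj h
      exact subtermAt_nil s
  | cons e p ih =>
      intro t t' s h
      cases t with
      | var n => rw [replaceAt_var_cons] at h; cases h
      | app a b =>
          cases e with
          | left =>
              rw [replaceAt_app_left, Option.map_eq_some_iff] at h
              obtain ⟨a', ha, rfl⟩ := h
              rw [subtermAt_app_left]
              exact ih a a' s ha
          | right =>
              rw [replaceAt_app_right, Option.map_eq_some_iff] at h
              obtain ⟨b', hb, rfl⟩ := h
              rw [subtermAt_app_right]
              exact ih b b' s hb
          | down => rw [replaceAt_app_down] at h; cases h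
      | abs a =>
          cases e with
          | left => rw [replaceAt_abs_left] at h; cases h
          | right => rw [replaceAt_abs_right] at h; cases h
          | down =>
              rw [replaceAt_abs_down, Option.map_eq_some_iff] at h
              obtain ⟨a', ha, rfl⟩ := h
              rw [subtermAt_abs_down]
              exact ih a a' s ha

theorem subtermAt_replaceAt_append : ∀ (q₁ : Pos) (t t' s w : Lam) (q₂ : Pos),
    replaceAt t (q₁ ++ q₂) s = some t' → subtermAt t q₁ = some w →
    ∃ w', replaceAt w q₂ s = some w' ∧ subtermAt t' q₁ = some w' := by
  intro q₁
  induction q₁ with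
  | nil =>
      intro t t' s w q₂ h hw
      rw [subtermAt_nil] at hw
      obtain rfl := Option.some.inj hw
      exact ⟨t', h, by rw [subtermAt_nil]⟩
  | cons e q₁ ih =>
      intro t t' s w q₂ h hw
      cases t with
      | var n => rw [subtermAt_var_cons] at hw; cases hw
      | app a b =>
          cases e with
          | left =>
              rw [subtermAt_app_left] at hw
              rw [List.cons_append, replaceAt_app_left, Option.map_eq_some_iff] at h
              obtain ⟨a', ha, rfl⟩ := h
              obtain ⟨w', h1, h2⟩ := ih a a' s w q₂ ha hw
              exact ⟨w', h1, by rw [subtermAt_app_left]; exact h2⟩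
          | right =>
              rw [subtermAt_app_right] at hw
              rw [List.cons_append, replaceAt_app_right, Option.map_eq_some_iff] at h
              obtain ⟨b', hb, rfl⟩ := h
              obtain ⟨w', h1, h2⟩ := ih b b' s w q₂ hb hw
              exact ⟨w', h1, by rw [subtermAt_app_right]; exact h2⟩
          | down => rw [subtermAt_app_down] at hw; cases hw
      | abs a =>
          cases e with
          | left => rw [subtermAt_abs_left] at hw; cases hw
          | right => rw [subtermAt_abs_right] at hw; cases hw
          | down =>
              rw [subtermAt_abs_down] at hw
              rw [List.cons_append, replaceAt_abs_down, Option.map_eq_some_iff] at h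
              obtain ⟨a', ha, rfl⟩ := h
              obtain ⟨w', h1, h2⟩ := ih a a' s w q₂ ha hw
              exact ⟨w', h1, by rw [subtermAt_abs_down]; exact h2⟩

theorem replaceAt_mkApps_lefts : ∀ (V : List Lam) (h s : Lam),
    replaceAt (mkApps h V) (List.replicate V.length Dir.left) s = some (mkApps s V) := by
  intro V
  induction V using List.reverseRecOn with
  | nil => intro h s; exact replaceAt_nil h s
  | append_singleton V a ih =>
      intro h s
      rw [mkApps_concat, mkApps_concat]
      simp only [List.length_append, List.length_singleton]
      rw [List.replicate_succ, replaceAt_app_left, ih]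
      rfl

theorem subtermAt_replaceAt_disjoint : ∀ (q : Pos) (t t' s : Lam) (p : Pos),
    replaceAt t p s = some t' → ¬ (p <+: q) → ¬ (q <+: p) →
    subtermAt t' q = subtermAt t q := by
  intro q
  induction q with
  | nil => intro t t' s p h h1 h2; exact absurd List.nil_prefix h2
  | cons e q ih =>
      intro t t' s p h h1 h2
      cases p with
      | nil => exact absurd List.nil_prefix h1
      | cons f p' =>
          cases t with
          | var n => rw [replaceAt_var_cons] at h; cases h
          | app a b =>
              cases f with
              | left =>
                  rw [replaceAt_app_left, Option.map_eq_some_iff] at h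
                  obtain ⟨a', ha, rfl⟩ := h
                  cases e with
                  | left =>
                      rw [subtermAt_app_left, subtermAt_app_left]
                      exact ih a a' s p' ha
                        (fun hc => h1 (List.cons_prefix_cons.mpr ⟨rfl, hc⟩))
                        (fun hc => h2 (List.cons_prefix_cons.mpr ⟨rfl, hc⟩))
                  | right => rw [subtermAt_app_right, subtermAt_app_right]
                  | down => rw [subtermAt_app_down, subtermAt_app_down]
              | right =>
                  rw [replaceAt_app_right, Option.map_eq_some_iff] at h
                  obtain ⟨b', hb, rfl⟩ := h
                  cases e with
                  | right =>
                      rw [subtermAt_app_right, subtermAt_app_right]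
                      exact ih b b' s p' hb
                        (fun hc => h1 (List.cons_prefix_cons.mpr ⟨rfl, hc⟩))
                        (fun hc => h2 (List.cons_prefix_cons.mpr ⟨rfl, hc⟩))
                  | left => rw [subtermAt_app_left, subtermAt_app_left]
                  | down => rw [subtermAt_app_down, subtermAt_app_down]
              | down => rw [replaceAt_app_down] at h; cases h
          | abs a =>
              cases f with
              | left => rw [replaceAt_abs_left] at h; cases h
              | right => rw [replaceAt_abs_right] at h; cases h
              | down =>
                  rw [replaceAt_abs_down, Option.map_eq_some_iff] at h
                  obtain ⟨a', ha, rfl⟩ := h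
                  cases e with
                  | down =>
                      rw [subtermAt_abs_down, subtermAt_abs_down]
                      exact ih a a' s p' ha
                        (fun hc => h1 (List.cons_prefix_cons.mpr ⟨rfl, hc⟩))
                        (fun hc => h2 (List.cons_prefix_cons.mpr ⟨rfl, hc⟩))
                  | left => rw [subtermAt_abs_left, subtermAt_abs_left]
                  | right => rw [subtermAt_abs_right, subtermAt_abs_right]

/-! ### occurrences and freeness -/

theorem free_of_occOf : ∀ (q : Pos) (t : Lam) (y : ℕ), OccOf y t q → Free y t := by
  intro q
  induction q with
  | nil =>
      intro t y h
      unfold OccOf at h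
      rw [subtermAt_nil] at h
      obtain rfl := Option.some.inj h
      show y = y + List.count Dir.down []
      simp
  | cons e q ih =>
      intro t y h
      unfold OccOf at h
      cases t with
      | var n => rw [subtermAt_var_cons] at h; cases h
      | app a b =>
          cases e with
          | left =>
              rw [subtermAt_app_left] at h
              exact Or.inl (ih a y (by rw [OccOf, h]; simp [List.count_cons]))
          | right =>
              rw [subtermAt_app_right] at h
              exact Or.inr (ih b y (by rw [OccOf, h]; simp [List.count_cons]))
          | down => rw [subtermAt_app_down] at h; cases h
      | abs a =>
          cases e with
          | left => rw [subtermAt_abs_left] at h; cases h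
          | right => rw [subtermAt_abs_right] at h; cases h
          | down =>
              rw [subtermAt_abs_down] at h
              show Free (y + 1) a
              refine ih a (y + 1) ?_
              rw [OccOf, h]
              congr 2
              simp [List.count_cons]
              omega

/-! ### Sqsubseteq -/

theorem sqsubseteq_refl (U : List Lam) : Sqsubseteq U U := by
  refine ⟨var, U, List.prefix_refl U, ?_⟩
  rw [List.forall₂_same]
  intro a _
  rw [psubst_id]
  exact Relation.ReflTransGen.refl

theorem sqsubseteq_of_take {U V : List Lam} (σ : ℕ → Lam)
    (h : List.Forall₂ (fun u w => Steps (psubst σ u) w) U (V.take U.length)) :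
    Sqsubseteq U V :=
  ⟨σ, V.take U.length, List.take_prefix _ _, h⟩

theorem sqsubseteq_trans {U V W : List Lam} (h1 : Sqsubseteq U V) (h2 : Sqsubseteq V W) :
    Sqsubseteq U W := by
  obtain ⟨σ₁, W₁, hpre₁, hall₁⟩ := h1
  obtain ⟨σ₂, W₂, hpre₂, hall₂⟩ := h2
  have hl₁ : U.length = W₁.length := hall₁.length_eq
  have hl₂ : V.length = W₂.length := hall₂.length_eq
  have hW₁V : W₁.length ≤ V.length := hpre₁.length_le
  have hW₂W : W₂.length ≤ W.length := hpre₂.length_le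
  refine sqsubseteq_of_take (fun n => psubst σ₂ (σ₁ n)) ?_
  rw [List.forall₂_iff_get]
  constructor
  · rw [List.length_take]; omega
  · intro i h₁ h₂
    simp only [List.get_eq_getElem, List.getElem_take]
    have hiV : i < V.length := by omega
    have hiW₁ : i < W₁.length := by omega
    have hiW₂ : i < W₂.length := by omega
    have s1 := (List.forall₂_iff_get.mp hall₁).2 i h₁ hiW₁
    have s2 := (List.forall₂_iff_get.mp hall₂).2 i hiV hiW₂
    simp only [List.get_eq_getElem] at s1 s2
    rw [hpre₁.getElem hiW₁] at s1
    rw [hpre₂.getElem hiW₂] at s2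
    have hs : Steps (psubst σ₂ (psubst σ₁ U[i])) W[i] :=
      Relation.ReflTransGen.trans (steps_psubst s1 σ₂) s2
    rwa [psubst_psubst] at hs

end Lam

namespace Lam

/-! ### All-left positions -/

def AL (q : Pos) : Prop := ∀ d ∈ q, d = Dir.left

theorem al_replicate (n : ℕ) : AL (List.replicate n Dir.left) := fun d hd =>
  List.eq_of_mem_replicate hd

theorem al_of_cons {d : Dir} {q : Pos} (h : AL (d :: q)) : AL q := fun e he =>
  h e (List.mem_cons_of_mem d he)

theorem al_cons_left {q : Pos} (h : AL q) : AL (Dir.left :: q) := by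
  intro e he
  rcases List.mem_cons.mp he with rfl | he
  · rfl
  · exact h e he

theorem not_al_of_mem {q : Pos} {d : Dir} (hd : d ∈ q) (h : d ≠ Dir.left) : ¬ AL q :=
  fun hal => h (hal d hd)

theorem nel_al_nil {q : Pos} (hn : NEL q) (ha : AL q) : q = [] := by
  rcases List.eq_nil_or_concat q with rfl | ⟨q0, d, hc⟩
  · rfl
  · exfalso
    rw [List.concat_eq_append] at hc
    have hd : d = Dir.left := ha d (by rw [hc]; simp)
    subst hd
    exact hn q0 hc

theorem argOf_al_replicate {t : Lam} {s : Pos} {U : List Lam}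
    (h : ArgOf t s U) (ha : AL s) : s = List.replicate U.length Dir.left := by
  obtain ⟨q, hh, hp, hq, _, _⟩ := h
  have haq : AL q := by
    intro d hd
    exact ha d (by rw [hp]; exact List.mem_append_left _ hd)
  have := nel_al_nil hq haq
  rw [hp, this, List.nil_append]

theorem count_down_replicate (m : ℕ) :
    List.count Dir.down (List.replicate m Dir.left) = 0 := by
  simp [List.count_replicate]

/-! ### Forall₂ helpers -/

theorem forall₂_psubst_map {σ : ℕ → Lam} {f : Lam → Lam}
    (hf : ∀ u, psubst σ u = f u) : ∀ U : List Lam,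
    List.Forall₂ (fun u w => Steps (psubst σ u) w) U (U.map f)
  | [] => List.Forall₂.nil
  | a :: U => List.Forall₂.cons (by rw [hf]; exact Relation.ReflTransGen.refl)
      (forall₂_psubst_map hf U)

theorem take_map_length {α β : Type _} (f : α → β) (U : List α) :
    (U.map f).take U.length = U.map f := by
  have h := List.take_length (l := U.map f)
  rwa [List.length_map] at h

theorem forall₂_refl_take (U V : List Lam) (h : U = V.take U.length) :
    List.Forall₂ (fun u w => Steps (psubst var u) w) U (V.take U.length) := by
  rw [← h, List.forall₂_same]
  intro a _
  rw [psubst_id]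
  exact Relation.ReflTransGen.refl

theorem forall₂_psubst_var_refl (U : List Lam) :
    List.Forall₂ (fun u w => Steps (psubst var u) w) U U := by
  rw [List.forall₂_same]
  intro a _
  rw [psubst_id]
  exact Relation.ReflTransGen.refl

/-! ### The single-step argument lemma -/

theorem step_occ_back {t t' : Lam} (hstep : Step t t') :
    ∀ (y : ℕ) (s : Pos) (U'' : List Lam),
    OccOf y t' s → ArgOf t' s U'' →
    ∃ (s₀ : Pos) (U' : List Lam) (σ : ℕ → Lam),
      OccOf y t s₀ ∧ ArgOf t s₀ U' ∧
      List.Forall₂ (fun u w => Steps (psubst σ u) w) U' (U''.take U'.length) ∧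
      U'.length ≤ U''.length ∧
      (AL s₀ → AL s ∧ U'.length = U''.length ∧ σ = var) := by
  induction hstep with
  | @appL a a' b hs ih =>
      intro y s U'' hocc harg
      cases s with
      | nil =>
          exfalso
          unfold OccOf at hocc
          rw [subtermAt_nil] at hocc
          cases hocc
      | cons e s' =>
          cases e with
          | down =>
              exfalso
              unfold OccOf at hocc
              rw [subtermAt_app_down] at hocc
              cases hocc
          | right =>
              have hocc' : OccOf y b s' := by
                unfold OccOf at hocc ⊢
                rw [subtermAt_app_right, count_down_right] at hocc
                exact hocc
              refine ⟨Dir.right :: s', U'', var, ?_, ?_, ?_, le_refl _, ?_⟩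
              · unfold OccOf
                rw [subtermAt_app_right, count_down_right]
                exact hocc'
              · exact argOf_right.mpr (argOf_right.mp harg)
              · exact forall₂_refl_take _ _ (by rw [List.take_length])
              · intro hAL
                exact absurd (hAL Dir.right List.mem_cons_self) (by simp)
          | left =>
              obtain ⟨U₀, hU₀, hcase⟩ := argOf_left.mp harg
              have hocc' : OccOf y a' s' := by
                unfold OccOf at hocc ⊢
                rw [subtermAt_app_left, count_down_left] at hocc
                exact hocc
              obtain ⟨s₀, U', σ, ho, ha0, hf, hle, hflag⟩ := ih y s' U₀ hocc' hU₀
              have hoccL : OccOf y (app a b) (Dir.left :: s₀) := by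
                unfold OccOf
                rw [subtermAt_app_left, count_down_left]
                exact ho
              by_cases hs₀ : s₀ = List.replicate U'.length Dir.left
              · -- source head-spine: flag applies
                obtain ⟨hALs', hlen, rfl⟩ := hflag (hs₀ ▸ al_replicate U'.length)
                have hs' : s' = List.replicate U₀.length Dir.left :=
                  argOf_al_replicate hU₀ hALs'
                rcases hcase with ⟨-, rfl⟩ | ⟨hne, -⟩
                · refine ⟨Dir.left :: s₀, U' ++ [b], var, hoccL,
                    argOf_left.mpr ⟨U', ha0, Or.inl ⟨hs₀, rfl⟩⟩, ?_, ?_, ?_⟩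
                  · have hleneq : (U' ++ [b]).length = (U₀ ++ [b]).length := by
                      simp [hlen]
                    rw [hleneq, List.take_length]
                    refine List.rel_append ?_ ?_
                    · rw [hlen, List.take_length] at hf
                      exact hf
                    · exact forall₂_psubst_var_refl [b]
                  · simp [hlen]
                  · intro _
                    refine ⟨al_cons_left hALs', by simp [hlen], rfl⟩
                · exact absurd hs' hne
              · -- source not head-spine
                have hflag' : AL (Dir.left :: s₀) → False := fun h =>
                  hs₀ (argOf_al_replicate ha0 (al_of_cons h))
                have hargL : ArgOf (app a b) (Dir.left :: s₀) U' :=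
                  argOf_left.mpr ⟨U', ha0, Or.inr ⟨hs₀, rfl⟩⟩
                rcases hcase with ⟨hrep, rfl⟩ | ⟨hne, rfl⟩
                · refine ⟨Dir.left :: s₀, U', σ, hoccL, hargL, ?_, ?_, ?_⟩
                  · rwa [List.take_append_of_le_length hle]
                  · rw [List.length_append]; omega
                  · intro h; exact absurd h hflag'
                · exact ⟨Dir.left :: s₀, U', σ, hoccL, hargL, hf, hle,
                    fun h => absurd h hflag'⟩
  | @appR a b b' hs ih =>
      intro y s U'' hocc harg
      cases s with
      | nil =>
          exfalso
          unfold OccOf at hocc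
          rw [subtermAt_nil] at hocc
          cases hocc
      | cons e s' =>
          cases e with
          | down =>
              exfalso
              unfold OccOf at hocc
              rw [subtermAt_app_down] at hocc
              cases hocc
          | right =>
              have hocc' : OccOf y b' s' := by
                unfold OccOf at hocc ⊢
                rw [subtermAt_app_right, count_down_right] at hocc
                exact hocc
              obtain ⟨s₀, U', σ, ho, ha0, hf, hle, hflag⟩ :=
                ih y s' U'' hocc' (argOf_right.mp harg)
              refine ⟨Dir.right :: s₀, U', σ, ?_, argOf_right.mpr ha0, hf, hle, ?_⟩
              · unfold OccOf
                rw [subtermAt_app_right, count_down_right]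
                exact ho
              · intro hAL
                exact absurd (hAL Dir.right List.mem_cons_self) (by simp)
          | left =>
              obtain ⟨U₀, hU₀, hcase⟩ := argOf_left.mp harg
              have hocc' : OccOf y (app a b) (Dir.left :: s') := by
                unfold OccOf at hocc ⊢
                rw [subtermAt_app_left] at hocc ⊢
                exact hocc
              rcases hcase with ⟨hrep, rfl⟩ | ⟨hne, rfl⟩
              · refine ⟨Dir.left :: s', U₀ ++ [b], var, hocc',
                  argOf_left.mpr ⟨U₀, hU₀, Or.inl ⟨hrep, rfl⟩⟩, ?_, ?_, ?_⟩
                · have htake : (U₀ ++ [b']).take (U₀ ++ [b]).length = U₀ ++ [b'] := by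
                    simp
                  rw [htake]
                  refine List.rel_append (forall₂_psubst_var_refl U₀) ?_
                  refine List.Forall₂.cons ?_ List.Forall₂.nil
                  rw [psubst_id]
                  exact Relation.ReflTransGen.single hs
                · simp
                · intro hAL
                  exact ⟨hAL, by simp, rfl⟩
              · refine ⟨Dir.left :: s', U'', var, hocc',
                  argOf_left.mpr ⟨U'', hU₀, Or.inr ⟨hne, rfl⟩⟩, ?_, le_refl _, ?_⟩
                · exact forall₂_refl_take _ _ (by rw [List.take_length])
                · intro hAL
                  exact ⟨hAL, rfl, rfl⟩
  | @abs a a' hs ih =>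
      intro y s U'' hocc harg
      cases s with
      | nil =>
          exfalso
          unfold OccOf at hocc
          rw [subtermAt_nil] at hocc
          cases hocc
      | cons e s' =>
          cases e with
          | left =>
              exfalso
              unfold OccOf at hocc
              rw [subtermAt_abs_left] at hocc
              cases hocc
          | right =>
              exfalso
              unfold OccOf at hocc
              rw [subtermAt_abs_right] at hocc
              cases hocc
          | down =>
              have hocc' : OccOf (y + 1) a' s' := by
                unfold OccOf at hocc ⊢
                rw [subtermAt_abs_down, count_down_down] at hocc
                rw [hocc]
                congr 2
                omega
              obtain ⟨s₀, U', σ, ho, ha0, hf, hle, hflag⟩ :=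
                ih (y + 1) s' U'' hocc' (argOf_down.mp harg)
              refine ⟨Dir.down :: s₀, U', σ, ?_, argOf_down.mpr ha0, hf, hle, ?_⟩
              · unfold OccOf at ho ⊢
                rw [subtermAt_abs_down, count_down_down, ho]
                congr 2
                omega
              · intro hAL
                exact absurd (hAL Dir.down List.mem_cons_self) (by simp)
  | @beta a b =>
      intro y s U'' hocc harg
      have hocc0 : subtermAt (subst a 0 b) s
          = some (var (y + List.count Dir.down s)) := hocc
      rcases subtermAt_subst_cases s a 0 b _ hocc0 with ⟨w₀, h1, h2⟩ | ⟨z, sb, rfl, hz, hb⟩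
      · -- occurrence at a position of `a`
        cases w₀ with
        | app w₁ w₂ => rw [subst_app] at h2; cases h2
        | abs w₁ => rw [subst_abs] at h2; cases h2
        | var m =>
            simp only [subst] at h2
            split at h2
            · -- m = 0 + count s : full copy of b, b must be var y
              rename_i hm
              obtain ⟨c₀, rfl⟩ := var_of_liftIter_eq_var h2.symm
              rw [liftIter_var] at h2
              split at h2
              · rename_i hc; injection h2 with h2'; omega
              · injection h2 with h2'
                have hc₀ : c₀ = y := by omega
                refine ⟨[Dir.right], [], var, ?_, ?_, ?_, by simp, ?_⟩
                · show subtermAt (app (abs a) (var c₀)) [Dir.right]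
                    = some (var (y + List.count Dir.down [Dir.right]))
                  rw [subtermAt_app_right, subtermAt_nil, hc₀]
                  simp
                · refine ⟨[Dir.right], var c₀, by simp, nel_cons_of_ne (by simp) nel_nil,
                    ?_, ?_⟩
                  · rw [subtermAt_app_right, subtermAt_nil]
                    rfl
                  · rw [subtermAt_app_right, subtermAt_nil]
                · rw [List.length_nil, List.take_zero]
                  exact List.Forall₂.nil
                · intro hAL
                  exact absurd (hAL Dir.right List.mem_cons_self) (by simp)
            · -- m ≠ 0 + count s
              split at h2
              · -- 0 + count s < m : occurrence comes from a
                rename_i hm hlt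
                injection h2 with h2'
                have hm' : m = y + List.count Dir.down s + 1 := by omega
                subst hm'
                -- h1 : subtermAt a s = some (var (y + count s + 1))
                obtain ⟨U_a, hArg_a⟩ := argOf_exists h1
                obtain ⟨r_a, h_a, hpa, hna, hsa, hha⟩ := hArg_a
                obtain ⟨r, hh, hpr, hnr, hsubr, hheadr⟩ := harg
                obtain ⟨rfl, hlen⟩ := strip_unique hnr hna (hpr.symm.trans hpa)
                -- compute subtermAt (subst a 0 b) r
                have hcomp := subtermAt_subst r a 0 b _ hsa
                rw [subst_mkApps] at hcomp
                rw [hcomp] at hsubr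
                obtain ⟨hhead_eq, hU''⟩ := mkApps_inj _ _ _ _
                  (by rw [List.length_map, ← hlen]) (Option.some.inj hsubr).symm
                set k := 0 + List.count Dir.down r with hk
                set B := (lift 0)^[List.count Dir.down r] b with hB
                refine ⟨Dir.left :: Dir.down :: s, U_a, substσ k B, ?_, ?_, ?_, ?_, ?_⟩
                · show subtermAt (app (abs a) b) (Dir.left :: Dir.down :: s)
                    = some (var (y + List.count Dir.down (Dir.left :: Dir.down :: s)))
                  rw [subtermAt_app_left, subtermAt_abs_down, h1, count_down_left,
                    count_down_down]
                  rfl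
                · exact argOf_left.mpr ⟨U_a,
                    argOf_down.mpr ⟨r, h_a, hpa, hna, hsa, hha⟩,
                    Or.inr ⟨cons_ne_replicate_left (by simp), rfl⟩⟩
                · rw [hU'']
                  have ht : (U_a.map (subst · k B)).take U_a.length
                      = U_a.map (subst · k B) := take_map_length _ _
                  rw [ht]
                  exact forall₂_psubst_map (fun u => (subst_eq_psubst u k B).symm) U_a
                · rw [hU'', List.length_map]
                · intro hAL
                  exact absurd (hAL Dir.down (by simp)) (by simp)
              · rename_i hm hle
                exfalso
                injection h2 with h2'
                omega
      · -- occurrence inside a substituted copy of b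
        set j := List.count Dir.down z with hj
        have hliftsub := subtermAt_liftIter j b sb
        rw [hliftsub] at hb
        rw [Option.map_eq_some_iff] at hb
        obtain ⟨wb, hwb, hwb2⟩ := hb
        obtain ⟨c₀, rfl⟩ := var_of_liftIter_eq_var hwb2
        rw [liftIter_var] at hwb2
        have hcnt : List.count Dir.down (z ++ sb)
            = j + List.count Dir.down sb := by
          rw [List.count_append]
        have hc₀ : c₀ = y + List.count Dir.down sb := by
          split at hwb2 <;> injection hwb2 with h2' <;> omega
        subst hc₀
        -- occurrence of y in b at sb
        have hoccb : OccOf y b sb := hwb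
        obtain ⟨U_b, hArg_b⟩ := argOf_exists hwb
        obtain ⟨r_b, h_b, hpb, hnb, hsubb, hheadb⟩ := hArg_b
        have hdrb : List.count Dir.down sb = List.count Dir.down r_b := by
          rw [hpb, List.count_append, count_down_replicate]
          omega
        obtain ⟨r, hh, hpr, hnr, hsubr, hheadr⟩ := harg
        -- compute subtermAt (subst a 0 b) z = B
        have hsubz := subtermAt_subst z a 0 b _ hz
        have hsubz' : subtermAt (subst a 0 b) z = some ((lift 0)^[j] b) := by
          rw [hsubz]
          congr 1
          show subst (var (0 + j)) (0 + j) ((lift 0)^[j] b) = _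
          simp [subst]
        refine ⟨Dir.right :: sb, U_b,
          (fun n => if n < List.count Dir.down r_b then var n else var (n + j)), ?_, ?_, ?_⟩
        · show subtermAt (app (abs a) b) (Dir.right :: sb)
            = some (var (y + List.count Dir.down (Dir.right :: sb)))
          rw [subtermAt_app_right, count_down_right, hwb]
        · exact argOf_right.mpr ⟨r_b, h_b, hpb, hnb, hsubb, hheadb⟩
        -- Now compute U''
        rcases List.eq_nil_or_concat r_b with hrb | ⟨rb0, rbd, hrb⟩
        · -- r_b = [] : copy-head case, arguments extend into a's context
          subst hrb
          rw [List.nil_append] at hpb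
          subst hpb
          rw [subtermAt_nil] at hsubb
          obtain rfl := (Option.some.inj hsubb)
          -- strip z
          obtain ⟨A, hArg_z⟩ := argOf_exists hz
          obtain ⟨r_z, h_z, hpz, hnz, hsz, hhz⟩ := hArg_z
          have hjz : j = List.count Dir.down r_z := by
            rw [hj, hpz, List.count_append, count_down_replicate]
            omega
          have hs_eq : z ++ List.replicate U_b.length Dir.left
              = r_z ++ List.replicate (A.length + U_b.length) Dir.left := by
            rw [hpz, List.replicate_add, List.append_assoc]
          obtain ⟨rfl, hlen⟩ := strip_unique hnr hnz
            (hpr.symm.trans hs_eq)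
          -- compute subterm at r_z
          have hhz' : h_z = var (0 + j) := by
            have h3 := hz
            rw [hhz] at h3
            exact (Option.some.inj h3)
          have hcomp := subtermAt_subst r a 0 (mkApps h_b U_b) _ hsz
          rw [subst_mkApps, hhz'] at hcomp
          have hheadsub : subst (var (0 + j)) (0 + List.count Dir.down r)
              ((lift 0)^[List.count Dir.down r] (mkApps h_b U_b))
              = (lift 0)^[j] (mkApps h_b U_b) := by
            rw [← hjz]
            simp [subst]
          rw [hheadsub, liftIter_mkApps, ← mkApps_append] at hcomp
          rw [hcomp] at hsubr
          obtain ⟨hhead_eq, hU''⟩ := mkApps_inj _ _ _ _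
            (by rw [List.length_append, List.length_map, List.length_map]; omega)
            (Option.some.inj hsubr).symm
          constructor
          · rw [hU'']
            have ht : (U_b.map ((lift 0)^[j]) ++ A.map (subst · (0 + List.count Dir.down r)
                ((lift 0)^[List.count Dir.down r] (mkApps h_b U_b)))).take U_b.length
                = U_b.map ((lift 0)^[j]) := by
              have := List.take_left (l₁ := U_b.map ((lift 0)^[j]))
                (l₂ := A.map (subst · (0 + List.count Dir.down r)
                  ((lift 0)^[List.count Dir.down r] (mkApps h_b U_b))))
              rwa [List.length_map] at this
            rw [ht]
            refine forall₂_psubst_map (fun u => ?_) U_b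
            rw [liftIter_eq_psubst]
            apply psubst_ext
            intro n
            rw [List.count_nil]
          constructor
          · rw [hU'', List.length_append, List.length_map]
            omega
          · intro hAL
            exact absurd (hAL Dir.right List.mem_cons_self) (by simp)
        · -- r_b ≠ [] : arguments stay inside the copy
          rw [List.concat_eq_append] at hrb
          have hrbne : r_b ≠ [] := by rw [hrb]; simp
          have hs_eq : z ++ sb = (z ++ r_b) ++ List.replicate U_b.length Dir.left := by
            rw [hpb, List.append_assoc]
          obtain ⟨hreq, hlen⟩ := strip_unique hnr (NEL.append hnb hrbne z)
            (hpr.symm.trans hs_eq)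
          -- compute subterm at z ++ r_b
          have hcomp : subtermAt (subst a 0 b) (z ++ r_b)
              = some ((lift (List.count Dir.down r_b))^[j] (mkApps h_b U_b)) := by
            rw [subtermAt_append, hsubz', Option.bind_some, subtermAt_liftIter, hsubb]
            rfl
          rw [hreq, hcomp] at hsubr
          rw [liftIter_mkApps] at hsubr
          obtain ⟨hhead_eq, hU''⟩ := mkApps_inj _ _ _ _
            (by rw [List.length_map, ← hlen]) (Option.some.inj hsubr).symm
          constructor
          · rw [hU'']
            have ht := take_map_length ((lift (List.count Dir.down r_b))^[j]) U_b
            rw [ht]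
            refine forall₂_psubst_map (fun u => (liftIter_eq_psubst j _ u).symm) U_b
          constructor
          · rw [hU'', List.length_map]
          · intro hAL
            exact absurd (hAL Dir.right List.mem_cons_self) (by simp)

end Lam

namespace Lam

theorem steps_occ_back {t w : Lam} (h : Steps t w) :
    ∀ (y : ℕ) (p' : Pos) (V : List Lam), OccOf y w p' → ArgOf w p' V →
    ∃ q U', OccOf y t q ∧ ArgOf t q U' ∧ Sqsubseteq U' V := by
  induction h using Relation.ReflTransGen.head_induction_on with
  | refl => exact fun y p' V ho ha => ⟨p', V, ho, ha, sqsubseteq_refl V⟩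
  | head hstep hrest ih =>
      intro y p' V ho ha
      obtain ⟨q'', U'', ho'', ha'', hsq⟩ := ih y p' V ho ha
      obtain ⟨s₀, U', σ, ho0, ha0, hf, hle, -⟩ := step_occ_back hstep y q'' U'' ho'' ha''
      exact ⟨s₀, U', ho0, ha0, sqsubseteq_trans (sqsubseteq_of_take σ hf) hsq⟩

end Lam

open Lam in
/-- if `u ▷* v` and the occurrence `p'` of `x` in `v` is a residue of
the occurrence `p` of `x` in `u`, then `Arg(x_[p], u) ⊑ Arg(x_[p'], v)`. -/
theorem arg_of_residue (x : ℕ) (u v : Lam) (p p' : Pos) (U V : List Lam)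
    (hred : Steps u v) (hocc : OccOf x u p) (hocc' : OccOf x v p')
    (hres : Residue x u v p p')
    (hU : ArgOf u p U) (hV : ArgOf v p' V) :
    Sqsubseteq U V := by
  obtain ⟨y, u₀, v₀, hfree, hrep, hsteps, hren, hoccy⟩ := hres
  -- the marked occurrence in u₀ and its arguments
  obtain ⟨r, hhu, hp, hnr, hsubu, hheadu⟩ := hU
  have hrep' : replaceAt u (r ++ List.replicate U.length Dir.left)
      (var (y + p.count Dir.down)) = some u₀ := by rw [← hp]; exact hrep
  obtain ⟨w', hrw, hsw⟩ :=
    subtermAt_replaceAt_append r u u₀ _ (mkApps hhu U) _ hrep' hsubu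
  rw [replaceAt_mkApps_lefts] at hrw
  obtain rfl := Option.some.inj hrw
  have hoccp : OccOf y u₀ p := subtermAt_replaceAt_self p u u₀ _ hrep
  have hoccp' : subtermAt u₀ p = some (var (y + p.count Dir.down)) := hoccp
  have hargp : ArgOf u₀ p U :=
    ⟨r, var (y + p.count Dir.down), hp, hnr, hsw, hoccp'⟩
  -- the marked occurrence in v₀ and its arguments
  obtain ⟨r', hhv, hp', hnr', hsubv, hheadv⟩ := hV
  have hrenst : Option.map (rename (y + List.count Dir.down r')
      (x + List.count Dir.down r')) (subtermAt v₀ r') = some (mkApps hhv V) := by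
    rw [← subtermAt_rename, hren, hsubv]
  rw [Option.map_eq_some_iff] at hrenst
  obtain ⟨w0, hw0, hw0r⟩ := hrenst
  obtain ⟨h₀, V₀, rfl, hren_h, hVmap, hlen⟩ := rename_mkApps_inv V w0 hhv hw0r
  have hsubv₀p' : subtermAt v₀ p' = some h₀ := by
    rw [hp', subtermAt_append, hw0, Option.bind_some, ← hlen, subtermAt_mkApps_lefts]
  have hoccy' : subtermAt v₀ p' = some (var (y + p'.count Dir.down)) := hoccy
  have hh₀ : h₀ = var (y + p'.count Dir.down) := by
    rw [hsubv₀p'] at hoccy'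
    exact Option.some.inj hoccy'
  have hargp' : ArgOf v₀ p' V₀ := ⟨r', h₀, by rw [hp', hlen], hnr', hw0, hsubv₀p'⟩
  -- pull the arguments back along the reduction
  obtain ⟨q, U', hoccq, hargq, hsq⟩ := steps_occ_back hsteps y p' V₀ hoccy hargp'
  -- the occurrence of y in u₀ is unique
  have hoccq' : subtermAt u₀ q = some (var (y + q.count Dir.down)) := hoccq
  have hqp : q = p := by
    by_cases hc1 : p <+: q
    · obtain ⟨ext, rfl⟩ := hc1
      cases ext with
      | nil => rw [List.append_nil]
      | cons e ext =>
          exfalso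
          rw [subtermAt_append, hoccp', Option.bind_some, subtermAt_var_cons] at hoccq'
          cases hoccq'
    · by_cases hc2 : q <+: p
      · obtain ⟨ext, hext⟩ := hc2
        cases ext with
        | nil => rw [← hext, List.append_nil]
        | cons e ext =>
            exfalso
            have h2 := hoccp'
            rw [← hext, subtermAt_append, hoccq', Option.bind_some,
              subtermAt_var_cons] at h2
            cases h2
      · exfalso
        have hdis := subtermAt_replaceAt_disjoint q u u₀ _ p hrep hc1 hc2
        have hoccu : OccOf y u q := by
          show subtermAt u q = _
          rw [← hdis]
          exact hoccq'
        exact hfree (free_of_occOf q u y hoccu)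
  subst hqp
  obtain rfl : U' = U := argOf_functional hargq hargp
  -- transport along the renaming
  refine sqsubseteq_trans hsq ⟨renσ (y + List.count Dir.down r') (x + List.count Dir.down r'),
    V, List.prefix_refl V, ?_⟩
  rw [hVmap]
  exact forall₂_psubst_map (fun u => (rename_eq_psubst u _ _).symm) V₀
end

section
/- (Barendregt's lemma / van Daalen) Let F be a term with free variable x and B a closed term, and assume F[x:=B] ▷* t. Then there is a term G with F ▷* G such that, writing I for the set of pure occurrences of x in G, w_i = (x_[i] Arg(x_[i], G)) for i ∈ I, and G = D[[]_i := w_i : i ∈ I] for a multi-hole context D in which x does not occur, one has t = D[[]_i := w'_i : i ∈ I] for some terms w'_i with w_i[x:=B] ▷* w'_i for each i ∈ I. -/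
namespace Lam

/-- `BL B d u t` : `t` is obtained from `u[x:=B]` (where `x` is the variable of de Bruijn
index `d`) by performing β-reductions only inside the subterms `w_i[x:=B]`, where the
`w_i = (x_[i] Arg(x_[i], u))` are the maximal applicative spines headed by the pure
occurrences `x_[i]` of `x` in `u`.  In other words, writing `u = D[[]_i := w_i : i ∈ I]`
for the x-free multi-hole context `D` whose holes are exactly these spines,
`t = D[[]_i := w'_i : i ∈ I]` with `w_i[x:=B] ▷* w'_i`. -/
inductive BL (B : Lam) : ℕ → Lam → Lam → Prop
  | spine {d : ℕ} {g w' : Lam} : Headed d g → Steps (subst g d B) w' → BL B d g w'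
  | var {d n : ℕ} : n ≠ d → BL B d (var n) (subst (var n) d B)
  | app {d : ℕ} {a b a' b' : Lam} : ¬ Headed d (app a b) →
      BL B d a a' → BL B d b b' → BL B d (app a b) (app a' b')
  | abs {d : ℕ} {a a' : Lam} : BL B (d + 1) a a' → BL B d (Lam.abs a) (Lam.abs a')

end Lam

set_option linter.unreachableTactic false
set_option linter.unusedTactic false
namespace Lam

/-! ### de Bruijn lemmas -/

theorem lift_lift_s5 {i j : ℕ} (h : i ≤ j) (t : Lam) :
    lift i (lift j t) = lift (j + 1) (lift i t) := by
  induction t generalizing i j with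
  | var n => simp only [lift]; split_ifs <;> simp only [lift] <;> split_ifs <;>
      first | rfl | omega
  | app a b iha ihb => simp [lift, iha h, ihb h]
  | abs a ih => simp [lift, ih (by omega : i + 1 ≤ j + 1)]

theorem subst_lift (k : ℕ) (t u : Lam) : subst (lift k t) k u = t := by
  induction t generalizing k u with
  | var n => simp only [lift]; split_ifs <;> simp only [subst] <;> split_ifs <;>
      first | rfl | omega | (congr 1; omega)
  | app a b iha ihb => simp [lift, subst, iha, ihb]
  | abs a ih => simp [lift, subst, ih]

/-- L3: `i ≤ k` : lift below the substitution point. -/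
theorem lift_subst_le {i k : ℕ} (h : i ≤ k) (t u : Lam) :
    lift i (subst t k u) = subst (lift i t) (k + 1) (lift i u) := by
  induction t generalizing i k u with
  | var n =>
      simp only [subst, lift]
      split_ifs <;> simp only [subst, lift] <;> split_ifs <;>
        first | rfl | omega | (congr 1; omega)
  | app a b iha ihb => simp [lift, subst, iha h, ihb h]
  | abs a ih =>
      simp only [lift, subst, abs.injEq]
      rw [ih (by omega : i + 1 ≤ k + 1), lift_lift_s5 (Nat.zero_le i)]

/-- L4: `k ≤ i` : lift above the substitution point. -/
theorem lift_subst_ge {i k : ℕ} (h : k ≤ i) (t u : Lam) :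
    lift i (subst t k u) = subst (lift (i + 1) t) k (lift i u) := by
  induction t generalizing i k u with
  | var n =>
      simp only [subst, lift]
      split_ifs <;> simp only [subst, lift] <;> split_ifs <;>
        first | rfl | omega | (congr 1; omega)
  | app a b iha ihb => simp [lift, subst, iha h, ihb h]
  | abs a ih =>
      simp only [lift, subst, abs.injEq]
      rw [ih (by omega : k + 1 ≤ i + 1), lift_lift_s5 (Nat.zero_le i)]

/-- L5: substitution lemma. -/
theorem subst_subst {k d : ℕ} (h : k ≤ d) (t u v : Lam) :
    subst (subst t k u) d v
      = subst (subst t (d + 1) (lift k v)) k (subst u d v) := by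
  induction t generalizing k d u v with
  | var n =>
      simp only [subst]
      split_ifs <;> (try simp only [subst]) <;> (try split_ifs) <;>
        first | rfl | omega | (congr 1; omega) | (rw [subst_lift])
  | app a b iha ihb => simp [subst, iha h, ihb h]
  | abs a ih =>
      simp only [subst, abs.injEq]
      rw [ih (by omega : k + 1 ≤ d + 1), lift_subst_le (Nat.zero_le d),
        lift_lift_s5 (Nat.zero_le k)]

/-! ### Closed terms -/

theorem lift_of_forall_not_free {j : ℕ} {t : Lam}
    (h : ∀ x, j ≤ x → ¬ Free x t) : lift j t = t := by
  induction t generalizing j with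
  | var n =>
      simp only [lift]
      split_ifs with hn
      · rfl
      · exact absurd rfl (h n (by omega))
  | app a b iha ihb =>
      simp only [lift, app.injEq]
      exact ⟨iha fun x hx hf => h x hx (Or.inl hf),
        ihb fun x hx hf => h x hx (Or.inr hf)⟩
  | abs a ih =>
      simp only [lift, abs.injEq]
      refine ih fun x hx hf => ?_
      obtain ⟨y, rfl⟩ : ∃ y, x = y + 1 := ⟨x - 1, by omega⟩
      exact h y (by omega) hf

theorem subst_of_forall_not_free {k : ℕ} {t : Lam} (u : Lam)
    (h : ∀ x, k ≤ x → ¬ Free x t) : subst t k u = t := by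
  induction t generalizing k u with
  | var n =>
      simp only [subst]
      split_ifs with h1 h2
      · exact absurd rfl (h n (by omega))
      · exact absurd rfl (h n (by omega))
      · rfl
  | app a b iha ihb =>
      simp only [subst, app.injEq]
      exact ⟨iha _ fun x hx hf => h x hx (Or.inl hf),
        ihb _ fun x hx hf => h x hx (Or.inr hf)⟩
  | abs a ih =>
      simp only [subst, abs.injEq]
      refine ih _ fun x hx hf => ?_
      obtain ⟨y, rfl⟩ : ∃ y, x = y + 1 := ⟨x - 1, by omega⟩
      exact h y (by omega) hf

theorem Closed.lift_eq {B : Lam} (hB : Closed B) (j : ℕ) : lift j B = B :=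
  lift_of_forall_not_free fun x _ => hB x

theorem Closed.subst_eq {B : Lam} (hB : Closed B) (k : ℕ) (u : Lam) :
    subst B k u = B :=
  subst_of_forall_not_free u fun x _ => hB x

end Lam

namespace Lam

/-! ### Step and Steps lemmas -/

theorem Steps.refl (t : Lam) : Steps t t := Relation.ReflTransGen.refl

theorem Steps.trans {a b c : Lam} (h1 : Steps a b) (h2 : Steps b c) : Steps a c :=
  Relation.ReflTransGen.trans h1 h2

theorem Step.steps {a b : Lam} (h : Step a b) : Steps a b :=
  Relation.ReflTransGen.single h

theorem Steps.appL {a a' : Lam} (b : Lam) (h : Steps a a') :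
    Steps (app a b) (app a' b) :=
  Relation.ReflTransGen.lift (fun x => app x b) (fun _ _ h => Step.appL b h) _ _ h

theorem Steps.appR (a : Lam) {b b' : Lam} (h : Steps b b') :
    Steps (app a b) (app a b') :=
  Relation.ReflTransGen.lift (fun x => app a x) (fun _ _ h => Step.appR a h) _ _ h

theorem Steps.app_congr {a a' b b' : Lam} (ha : Steps a a') (hb : Steps b b') :
    Steps (app a b) (app a' b') :=
  (Steps.appL b ha).trans (Steps.appR a' hb)

theorem Steps.abs {a a' : Lam} (h : Steps a a') : Steps (Lam.abs a) (Lam.abs a') :=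
  Relation.ReflTransGen.lift Lam.abs (fun _ _ h => Step.abs h) _ _ h

theorem Step.lift {t t' : Lam} (j : ℕ) (h : Step t t') :
    Step (lift j t) (lift j t') := by
  induction h generalizing j with
  | beta a b =>
      have : Lam.lift j (subst a 0 b) = subst (Lam.lift (j + 1) a) 0 (Lam.lift j b) :=
        lift_subst_ge (Nat.zero_le j) a b
      rw [this]
      exact Step.beta _ _
  | appL b _ ih => exact Step.appL _ (ih j)
  | appR a _ ih => exact Step.appR _ (ih j)
  | abs _ ih => exact Step.abs (ih (j + 1))

theorem Steps.lift {t t' : Lam} (j : ℕ) (h : Steps t t') :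
    Steps (lift j t) (lift j t') :=
  Relation.ReflTransGen.lift (Lam.lift j) (fun _ _ (h : Step _ _) => h.lift j) _ _ h

theorem Step.subst_left {t t' : Lam} (k : ℕ) (u : Lam) (h : Step t t') :
    Step (subst t k u) (subst t' k u) := by
  induction h generalizing k u with
  | beta a b =>
      have : subst (subst a 0 b) k u
          = subst (subst a (k + 1) (Lam.lift 0 u)) 0 (subst b k u) :=
        subst_subst (Nat.zero_le k) a b u
      rw [this]
      exact Step.beta _ _
  | appL b _ ih => exact Step.appL _ (ih k u)
  | appR a _ ih => exact Step.appR _ (ih k u)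
  | abs _ ih => exact Step.abs (ih (k + 1) (Lam.lift 0 u))

theorem Steps.subst_left {t t' : Lam} (k : ℕ) (u : Lam) (h : Steps t t') :
    Steps (subst t k u) (subst t' k u) :=
  Relation.ReflTransGen.lift (fun x => subst x k u) (fun _ _ (h : Step _ _) => h.subst_left k u) _ _ h

theorem Steps.subst_right (t : Lam) (k : ℕ) {u u' : Lam} (h : Steps u u') :
    Steps (subst t k u) (subst t k u') := by
  induction t generalizing k u u' with
  | var n =>
      simp only [subst]
      split_ifs
      · exact h
      · exact Steps.refl _
      · exact Steps.refl _
  | app a b iha ihb => exact Steps.app_congr (iha k h) (ihb k h)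
  | abs a ih => exact Steps.abs (ih (k + 1) (h.lift 0))

theorem Steps.subst_congr {t t' u u' : Lam} (k : ℕ) (ht : Steps t t')
    (hu : Steps u u') : Steps (subst t k u) (subst t' k u') :=
  (ht.subst_left k u).trans (Steps.subst_right t' k hu)

/-! ### Headed lemmas -/

theorem headed_app_iff {d : ℕ} {a b : Lam} : Headed d (app a b) ↔ Headed d a := by
  constructor
  · intro h
    cases h with
    | app _ h => exact h
  · intro h
    exact Headed.app b h

theorem headed_var_eq {e m : ℕ} (h : Headed e (var m)) : m = e := by
  cases h; rfl

theorem headed_of_lift {d j : ℕ} {g : Lam} (hj : j ≤ d)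
    (h : Headed d g) : Headed (d + 1) (lift j g) := by
  induction h with
  | var => simp only [lift, if_neg (by omega : ¬ d < j)]; exact Headed.var _
  | app b _ ih => exact Headed.app _ ih

theorem headed_subst_lower {d k : ℕ} {g : Lam} (hk : k < d + 1) (b : Lam)
    (h : Headed (d + 1) g) : Headed d (subst g k b) := by
  induction h with
  | var =>
      simp only [subst, if_neg (by omega : ¬ d + 1 = k),
        if_pos (by omega : k < d + 1)]
      exact Headed.var _
  | app c _ ih => exact Headed.app _ ih

theorem headed_lift_lower {d j : ℕ} {g : Lam} (hj : j ≤ d)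
    (h : Headed (d + 1) (lift j g)) : Headed d g := by
  induction g with
  | var n =>
      simp only [lift] at h
      split_ifs at h with hn
      · have := headed_var_eq h; omega
      · have h2 : n = d := by have := headed_var_eq h; omega
        rw [h2]; exact Headed.var d
  | app a b iha ihb =>
      simp only [lift] at h
      cases h with | app _ h => exact Headed.app _ (iha h)
  | abs a _ => simp only [lift] at h; cases h

end Lam

namespace Lam

/-! ### BL lemmas -/

theorem bl_var_eq {B : Lam} {d n : ℕ} {w : Lam} (hne : n ≠ d)
    (hw : subst (var n) d B = w) : BL B d (var n) w := hw ▸ BL.var hne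

theorem bl_refl {B : Lam} (hB : Closed B) : ∀ (d : ℕ) (u : Lam), BL B d u (subst u d B)
  | d, var n => by
      by_cases h : n = d
      · cases h; exact BL.spine (Headed.var _) (Steps.refl _)
      · exact BL.var h
  | d, app a b => by
      by_cases h : Headed d (app a b)
      · exact BL.spine h (Steps.refl _)
      · exact BL.app h (bl_refl hB d a) (bl_refl hB d b)
  | d, abs a => by
      show BL B d (abs a) (abs (subst a (d + 1) (lift 0 B)))
      rw [hB.lift_eq]
      exact BL.abs (bl_refl hB (d + 1) a)

theorem bl_to_steps {B : Lam} (hB : Closed B) {d : ℕ} {u w : Lam}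
    (h : BL B d u w) : Steps (subst u d B) w := by
  induction h with
  | spine _ hw => exact hw
  | var _ => exact Steps.refl _
  | app _ _ _ iha ihb => exact Steps.app_congr iha ihb
  | abs _ ih =>
      show Steps (abs (subst _ _ (lift 0 B))) _
      rw [hB.lift_eq]
      exact Steps.abs ih

theorem bl_lift {B : Lam} (hB : Closed B) {e : ℕ} {b b' : Lam}
    (h : BL B e b b') : ∀ j ≤ e, BL B (e + 1) (lift j b) (lift j b') := by
  induction h with
  | @spine d g w' hg hw =>
      intro j hj
      refine BL.spine (headed_of_lift hj hg) ?_
      have e1 : subst (lift j g) (d + 1) B = lift j (subst g d B) := by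
        conv_lhs => rw [← hB.lift_eq j]
        rw [← lift_subst_le hj]
      rw [e1]
      exact hw.lift j
  | @var d n hn =>
      intro j hj
      have e1 : lift j (subst (var n) d B) = subst (lift j (var n)) (d + 1) B := by
        rw [lift_subst_le hj, hB.lift_eq]
      rw [e1]
      simp only [lift]
      split_ifs
      · exact BL.var (by omega)
      · exact BL.var (by omega)
  | @app d a b a' b' hnh _ _ iha ihb =>
      intro j hj
      simp only [lift]
      refine BL.app ?_ (iha j hj) (ihb j hj)
      intro hcon
      rw [headed_app_iff] at hcon hnh
      exact hnh (headed_lift_lower hj hcon)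
  | @abs d a a' _ ih =>
      intro j hj
      simp only [lift]
      exact BL.abs (ih (j + 1) (by omega))

theorem bl_subst {B : Lam} (hB : Closed B) {e : ℕ} {c c' : Lam}
    (h : BL B e c c') : ∀ {k : ℕ} {b b' : Lam}, k < e → BL B (e - 1) b b' →
      BL B (e - 1) (subst c k b) (subst c' k b') := by
  induction h with
  | @spine d g w' hg hw =>
      intro k b b' hk hbb
      have hd : d - 1 + 1 = d := by omega
      refine BL.spine (headed_subst_lower (d := d - 1) (by omega) b (by rw [hd]; exact hg)) ?_
      have e1 : subst (subst g k b) (d - 1) B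
          = subst (subst g d B) k (subst b (d - 1) B) := by
        rw [subst_subst (by omega : k ≤ d - 1), hB.lift_eq, hd]
      rw [e1]
      exact Steps.subst_congr k hw (bl_to_steps hB hbb)
  | @var d n hn =>
      intro k b b' hk hbb
      simp only [subst]
      split_ifs <;> (try simp only [subst]) <;> (try split_ifs) <;>
        first
          | exact hbb
          | omega
          | (apply bl_var_eq (by omega)
             simp only [subst]
             split_ifs <;> first | rfl | omega | (congr 1; omega))
  | @app d p q p' q' hnh hp hq ihp ihq =>
      intro k b b' hk hbb
      have hd : d - 1 + 1 = d := by omega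
      show BL B (d - 1) (app (subst p k b) (subst q k b))
        (app (subst p' k b') (subst q' k b'))
      by_cases hh : Headed (d - 1) (app (subst p k b) (subst q k b))
      · refine BL.spine hh ?_
        have e1 : subst (app (subst p k b) (subst q k b)) (d - 1) B
            = subst (subst (app p q) d B) k (subst b (d - 1) B) := by
          show subst (subst (app p q) k b) (d - 1) B = _
          rw [subst_subst (by omega : k ≤ d - 1), hB.lift_eq, hd]
        rw [e1]
        exact Steps.subst_congr k (bl_to_steps hB (BL.app hnh hp hq)) (bl_to_steps hB hbb)
      · exact BL.app hh (ihp hk hbb) (ihq hk hbb)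
  | @abs d a a' ha ih =>
      intro k b b' hk hbb
      have hd : d - 1 + 1 = d := by omega
      show BL B (d - 1) (abs (subst a (k + 1) (lift 0 b)))
        (abs (subst a' (k + 1) (lift 0 b')))
      refine BL.abs ?_
      rw [hd]
      have hlift : BL B d (lift 0 b) (lift 0 b') := by
        have := bl_lift hB hbb 0 (Nat.zero_le _)
        rwa [hd] at this
      have := ih (k := k + 1) (by omega) (by rw [Nat.add_sub_cancel]; exact hlift)
      rwa [Nat.add_sub_cancel] at this

theorem bl_abs_inv {B : Lam} {d : ℕ} {a c : Lam} (hnh : ¬ Headed d a)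
    (h : BL B d a (Lam.abs c)) : ∃ c0, a = Lam.abs c0 ∧ BL B (d + 1) c0 c := by
  generalize hq : Lam.abs c = w at h
  induction h with
  | spine hg _ => exact absurd hg hnh
  | @var d n hn =>
      simp only [subst] at hq
      split_ifs at hq with h1 h2
      · exact absurd h1 hn
      all_goals simp at hq
  | app _ _ _ _ _ => simp at hq
  | @abs d a0 a0' hc _ =>
      injection hq with h
      exact ⟨a0, rfl, h ▸ hc⟩

theorem bl_step {B : Lam} (hB : Closed B) {d : ℕ} {u t t' : Lam}
    (hbl : BL B d u t) (hs : Step t t') :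
    ∃ u', Steps u u' ∧ BL B d u' t' := by
  induction hbl generalizing t' with
  | @spine d g w' hg hw => exact ⟨g, Steps.refl g, BL.spine hg (hw.trans hs.steps)⟩
  | @var d n hn =>
      exfalso
      revert hs
      simp only [subst]
      split_ifs with h1 h2
      · exact fun _ => hn h1
      · exact fun hs => nomatch hs
      · exact fun hs => nomatch hs
  | @app d a b a' b' hnh ha hb iha ihb =>
      cases hs with
      | @beta c barg =>
          -- a' = abs c, t' = subst c 0 b'
          obtain ⟨c0, rfl, hc⟩ := bl_abs_inv (fun hg => hnh (Headed.app b hg)) ha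
          refine ⟨subst c0 0 b, (Step.beta c0 b).steps, ?_⟩
          have := bl_subst hB hc (k := 0) (by omega) (b := b) (b' := b')
            (by rw [Nat.add_sub_cancel]; exact hb)
          rwa [Nat.add_sub_cancel] at this
      | @appL _ a'' _ hstep =>
          obtain ⟨a1, hsa, hba⟩ := iha hstep
          by_cases hh : Headed d (app a1 b)
          · refine ⟨app a1 b, Steps.appL b hsa, BL.spine hh ?_⟩
            exact Steps.app_congr (bl_to_steps hB hba) (bl_to_steps hB hb)
          · exact ⟨app a1 b, Steps.appL b hsa, BL.app hh hba hb⟩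
      | @appR _ _ b'' hstep =>
          obtain ⟨b1, hsb, hbb⟩ := ihb hstep
          refine ⟨app a b1, Steps.appR a hsb, BL.app ?_ ha hbb⟩
          rw [headed_app_iff] at hnh ⊢
          exact hnh
  | @abs d a a' ha ih =>
      cases hs with
      | abs hstep =>
          obtain ⟨a1, hsa, hba⟩ := ih hstep
          exact ⟨abs a1, hsa.abs, BL.abs hba⟩

end Lam


open Lam in
/-- Barendregt's lemma / van Daalen: if `B` is closed and
`F[x:=B] ▷* t`, then there is `G` with `F ▷* G` such that `t` is obtained from `G` by
substituting `B` for `x` and reducing only inside the maximal spines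
`(x_[i] Arg(x_[i], G))` of the pure occurrences of `x` in `G`. -/
theorem barendregt_lemma (F B t : Lam) (hB : Closed B)
    (h : Steps (subst F 0 B) t) :
    ∃ G, Steps F G ∧ BL B 0 G t := by
  have h' : Relation.ReflTransGen Step (subst F 0 B) t := h
  clear h
  induction h' with
  | refl => exact ⟨F, Steps.refl F, bl_refl hB 0 F⟩
  | tail _ hstep ih =>
      obtain ⟨G, hFG, hbl⟩ := ih
      obtain ⟨G', hGG', hbl'⟩ := bl_step hB hbl hstep
      exact ⟨G', hFG.trans hGG', hbl'⟩
end
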